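/- arXiv:1002.4289 — 4 statements merged into one kernel-verified Lean document; each statement's English description precedes it below -/
import Mathlib

section
/- Let \hat q(u) be a power series with nonnegative coefficients q_N ≤ C e^{-νN}, Σ q_N = 1, aperiodic, and μ = Σ N q_N. Define Δ(u) = [(\hat q(u) − 1) − μ(u−1)] / [(\hat q(u) − 1)·μ·(u−1)]. Then Δ extends to an analytic function on a disc of radius 1 + ν' for some ν' > 0; in particular Δ has a removable singularity at u = 1. -/
open Metric

private lemma aux_polyid (u : ℂ) (N : ℕ) :
    (u - 1) ^ 2 * ∑ k ∈ Finset.range N, ∑ j ∈ Finset.range k, u ^ j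
      = u ^ N - 1 - (N : ℂ) * (u - 1) := by
  induction N with
  | zero => simp
  | succ n ih =>
    rw [Finset.sum_range_succ, mul_add, ih]
    have := geom_sum_mul u n
    push_cast
    linear_combination (u - 1) * this

private lemma aux_norm1 {u : ℂ} {r : ℝ} (hr : 1 ≤ r) (hu : ‖u‖ ≤ r) (N : ℕ) :
    ‖∑ k ∈ Finset.range N, u ^ k‖ ≤ (N : ℝ) * r ^ N := by
  calc ‖∑ k ∈ Finset.range N, u ^ k‖ ≤ ∑ k ∈ Finset.range N, ‖u ^ k‖ :=
        norm_sum_le _ _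
    _ ≤ ∑ _k ∈ Finset.range N, r ^ N := by
        apply Finset.sum_le_sum
        intro k hk
        rw [norm_pow]
        calc ‖u‖ ^ k ≤ r ^ k := pow_le_pow_left₀ (norm_nonneg u) hu k
          _ ≤ r ^ N := pow_le_pow_right₀ hr (Finset.mem_range.1 hk).le
    _ = (N : ℝ) * r ^ N := by
        rw [Finset.sum_const, Finset.card_range, nsmul_eq_mul]

private lemma aux_norm2 {u : ℂ} {r : ℝ} (hr : 1 ≤ r) (hu : ‖u‖ ≤ r) (N : ℕ) :
    ‖∑ k ∈ Finset.range N, ∑ j ∈ Finset.range k, u ^ j‖ ≤ (N : ℝ) ^ 2 * r ^ N := by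
  have h0 : (0:ℝ) < r := lt_of_lt_of_le one_pos hr
  calc ‖∑ k ∈ Finset.range N, ∑ j ∈ Finset.range k, u ^ j‖
      ≤ ∑ k ∈ Finset.range N, ‖∑ j ∈ Finset.range k, u ^ j‖ := norm_sum_le _ _
    _ ≤ ∑ _k ∈ Finset.range N, (N : ℝ) * r ^ N := by
        apply Finset.sum_le_sum
        intro k hk
        calc ‖∑ j ∈ Finset.range k, u ^ j‖ ≤ (k : ℝ) * r ^ k := aux_norm1 hr hu k
          _ ≤ (N : ℝ) * r ^ N := by
              have hkN : (k:ℝ) ≤ N := Nat.cast_le.2 (Finset.mem_range.1 hk).le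
              have := pow_le_pow_right₀ hr (Finset.mem_range.1 hk).le
              have hk0 : (0:ℝ) ≤ (k:ℝ) := Nat.cast_nonneg k
              nlinarith [pow_nonneg h0.le k, pow_nonneg h0.le N]
    _ = (N : ℝ) ^ 2 * r ^ N := by
        rw [Finset.sum_const, Finset.card_range, nsmul_eq_mul]; ring


/-- The error function `Δ(u) = [(q̂(u)-1) - μ(u-1)] / [(q̂(u)-1)·μ·(u-1)]` of the renewal
analysis extends to an analytic function on a disc of radius `1 + ν'` for some `ν' > 0`;
in particular it has a removable singularity at `u = 1`. -/
theorem stmt_3 (q : ℕ → ℝ) (C ν : ℝ) (hν : 0 < ν)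
    (hq0 : q 0 = 0) (hqnn : ∀ N, 0 ≤ q N)
    (hqsum : ∑' N : ℕ, q N = 1)
    (hqtail : ∀ N : ℕ, q N ≤ C * Real.exp (-ν * N))
    (haper : ∀ d : ℕ, (∀ N : ℕ, q N ≠ 0 → d ∣ N) → d = 1) :
    ∃ ν' > 0, ∃ F : ℂ → ℂ,
      DifferentiableOn ℂ F (ball (0 : ℂ) (1 + ν')) ∧
      ∀ u ∈ ball (0 : ℂ) (1 + ν'), u ≠ 1 →
        F u = (((∑' N : ℕ, u ^ N * (q N : ℂ)) - 1)
                - ((∑' N : ℕ, (N : ℝ) * q N : ℝ) : ℂ) * (u - 1)) /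
              (((∑' N : ℕ, u ^ N * (q N : ℂ)) - 1)
                * ((∑' N : ℕ, (N : ℝ) * q N : ℝ) : ℂ) * (u - 1)) := by
  classical
  have hC : 0 ≤ C := by have h := hqtail 0; simpa [hq0] using h
  set r : ℝ := Real.exp (ν / 2) with hrdef
  have hr1 : 1 < r := by
    rw [hrdef, show (1:ℝ) = Real.exp 0 from Real.exp_zero.symm]
    exact Real.exp_lt_exp.2 (by linarith)
  have hr0 : (0:ℝ) < r := lt_trans one_pos hr1
  set x : ℝ := Real.exp (-(ν / 2)) with hxdef
  have hx1 : x < 1 := Real.exp_lt_one_iff.2 (by linarith)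
  have hx0 : (0:ℝ) < x := Real.exp_pos _
  have hkey : ∀ N : ℕ, r ^ N * Real.exp (-ν * N) = x ^ N := by
    intro N
    rw [hrdef, hxdef, ← Real.exp_nat_mul, ← Real.exp_nat_mul, ← Real.exp_add]
    congr 1; ring
  -- summability of q
  have hqsummable : Summable q := by
    by_contra hs
    rw [tsum_eq_zero_of_not_summable hs] at hqsum
    norm_num at hqsum
  -- summable geometric bounds
  have hS0 : Summable (fun N : ℕ => C * x ^ N) :=
    (summable_geometric_of_lt_one hx0.le hx1).mul_left C
  have hS1 : Summable (fun N : ℕ => C * ((N : ℝ) * x ^ N)) := by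
    have := summable_pow_mul_geometric_of_norm_lt_one 1 (r := x) (by rwa [Real.norm_eq_abs, abs_of_pos hx0])
    simpa [pow_one] using this.mul_left C
  have hS2 : Summable (fun N : ℕ => C * ((N : ℝ) ^ 2 * x ^ N)) := by
    have := summable_pow_mul_geometric_of_norm_lt_one 2 (r := x) (by rwa [Real.norm_eq_abs, abs_of_pos hx0])
    exact this.mul_left C
  -- term-by-term bounds
  have hb0 : ∀ u : ℂ, ‖u‖ ≤ r → ∀ N : ℕ, ‖u ^ N * (q N : ℂ)‖ ≤ C * x ^ N := by
    intro u hu N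
    rw [norm_mul, norm_pow, Complex.norm_real, Real.norm_eq_abs, abs_of_nonneg (hqnn N)]
    calc ‖u‖ ^ N * q N ≤ r ^ N * (C * Real.exp (-ν * N)) := by
          apply mul_le_mul (pow_le_pow_left₀ (norm_nonneg u) hu N) (hqtail N) (hqnn N)
            (pow_nonneg hr0.le N)
      _ = C * x ^ N := by rw [← hkey N]; ring
  have hb1 : ∀ u : ℂ, ‖u‖ ≤ r → ∀ N : ℕ,
      ‖(q N : ℂ) * ∑ k ∈ Finset.range N, u ^ k‖ ≤ C * ((N : ℝ) * x ^ N) := by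
    intro u hu N
    rw [norm_mul, Complex.norm_real, Real.norm_eq_abs, abs_of_nonneg (hqnn N)]
    calc q N * ‖∑ k ∈ Finset.range N, u ^ k‖
        ≤ (C * Real.exp (-ν * N)) * ((N : ℝ) * r ^ N) := by
          apply mul_le_mul (hqtail N) (aux_norm1 hr1.le hu N) (norm_nonneg _)
            (by positivity)
      _ = C * ((N : ℝ) * x ^ N) := by rw [← hkey N]; ring
  have hb2 : ∀ u : ℂ, ‖u‖ ≤ r → ∀ N : ℕ,
      ‖(q N : ℂ) * ∑ k ∈ Finset.range N, ∑ j ∈ Finset.range k, u ^ j‖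
        ≤ C * ((N : ℝ) ^ 2 * x ^ N) := by
    intro u hu N
    rw [norm_mul, Complex.norm_real, Real.norm_eq_abs, abs_of_nonneg (hqnn N)]
    calc q N * ‖∑ k ∈ Finset.range N, ∑ j ∈ Finset.range k, u ^ j‖
        ≤ (C * Real.exp (-ν * N)) * ((N : ℝ) ^ 2 * r ^ N) := by
          apply mul_le_mul (hqtail N) (aux_norm2 hr1.le hu N) (norm_nonneg _)
            (by positivity)
      _ = C * ((N : ℝ) ^ 2 * x ^ N) := by rw [← hkey N]; ring
  -- summability of the three series
  have hSf : ∀ u : ℂ, ‖u‖ ≤ r → Summable (fun N : ℕ => u ^ N * (q N : ℂ)) :=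
    fun u hu => Summable.of_norm_bounded hS0 (hb0 u hu)
  have hShh : ∀ u : ℂ, ‖u‖ ≤ r →
      Summable (fun N : ℕ => (q N : ℂ) * ∑ k ∈ Finset.range N, u ^ k) :=
    fun u hu => Summable.of_norm_bounded hS1 (hb1 u hu)
  have hSgg : ∀ u : ℂ, ‖u‖ ≤ r →
      Summable (fun N : ℕ => (q N : ℂ) * ∑ k ∈ Finset.range N, ∑ j ∈ Finset.range k, u ^ j) :=
    fun u hu => Summable.of_norm_bounded hS2 (hb2 u hu)
  have hSq : Summable (fun N : ℕ => (q N : ℂ)) := Complex.summable_ofReal.2 hqsummable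
  have htsumq : ∑' N : ℕ, (q N : ℂ) = 1 := by
    rw [← Complex.ofReal_tsum, hqsum, Complex.ofReal_one]
  -- μ
  have hSNq : Summable (fun N : ℕ => (N : ℝ) * q N) := by
    have hy1 : Real.exp (-ν) < 1 := Real.exp_lt_one_iff.2 (by linarith)
    have hy0 : (0:ℝ) < Real.exp (-ν) := Real.exp_pos _
    have hs : Summable (fun N : ℕ => C * ((N : ℝ) * Real.exp (-ν) ^ N)) := by
      have := summable_pow_mul_geometric_of_norm_lt_one 1 (r := Real.exp (-ν))
        (by rwa [Real.norm_eq_abs, abs_of_pos hy0])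
      simpa [pow_one] using this.mul_left C
    apply Summable.of_nonneg_of_le (fun N => mul_nonneg (Nat.cast_nonneg N) (hqnn N)) _ hs
    intro N
    calc (N : ℝ) * q N ≤ (N : ℝ) * (C * Real.exp (-ν * N)) :=
          mul_le_mul_of_nonneg_left (hqtail N) (Nat.cast_nonneg N)
      _ = C * ((N : ℝ) * Real.exp (-ν) ^ N) := by
          rw [← Real.exp_nat_mul]; ring_nf
  set μC : ℂ := ((∑' N : ℕ, (N : ℝ) * q N : ℝ) : ℂ) with hμCdef
  have hSNqC : Summable (fun N : ℕ => (N : ℂ) * (q N : ℂ)) := by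
    refine (Complex.summable_ofReal.2 hSNq).congr fun N => ?_
    push_cast; ring
  have hμC : μC = ∑' N : ℕ, (N : ℂ) * (q N : ℂ) := by
    rw [hμCdef, Complex.ofReal_tsum]
    exact tsum_congr fun N => by push_cast; ring
  have hμ1 : 1 ≤ ∑' N : ℕ, (N : ℝ) * q N := by
    rw [← hqsum]
    apply Summable.tsum_le_tsum _ hqsummable hSNq
    intro N
    match N with
    | 0 => simp [hq0]
    | (n+1) =>
      have := hqnn (n+1)
      have : (1:ℝ) ≤ (n+1:ℕ) := by exact_mod_cast Nat.one_le_iff_ne_zero.2 (Nat.succ_ne_zero n)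
      nlinarith [hqnn (n+1)]
  have hμne : μC ≠ 0 := by
    rw [hμCdef]
    exact_mod_cast Complex.ofReal_ne_zero.2 (by linarith)
  -- the two auxiliary analytic functions
  set hh : ℂ → ℂ := fun u => ∑' N : ℕ, (q N : ℂ) * ∑ k ∈ Finset.range N, u ^ k with hhdef
  set gg : ℂ → ℂ :=
    fun u => ∑' N : ℕ, (q N : ℂ) * ∑ k ∈ Finset.range N, ∑ j ∈ Finset.range k, u ^ j with ggdef
  -- identity (i)
  have hid1 : ∀ u : ℂ, ‖u‖ ≤ r → (u - 1) * hh u = (∑' N : ℕ, u ^ N * (q N : ℂ)) - 1 := by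
    intro u hu
    rw [hhdef]
    simp only
    rw [← tsum_mul_left]
    have hterm : ∀ N : ℕ, (u - 1) * ((q N : ℂ) * ∑ k ∈ Finset.range N, u ^ k)
        = u ^ N * (q N : ℂ) - (q N : ℂ) := by
      intro N
      linear_combination (q N : ℂ) * geom_sum_mul u N
    rw [tsum_congr hterm, Summable.tsum_sub (hSf u hu) hSq, htsumq]
  -- identity (ii)
  have hid2 : ∀ u : ℂ, ‖u‖ ≤ r → (u - 1) ^ 2 * gg u
      = ((∑' N : ℕ, u ^ N * (q N : ℂ)) - 1) - μC * (u - 1) := by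
    intro u hu
    rw [ggdef]
    simp only
    rw [← tsum_mul_left]
    have hterm : ∀ N : ℕ,
        (u - 1) ^ 2 * ((q N : ℂ) * ∑ k ∈ Finset.range N, ∑ j ∈ Finset.range k, u ^ j)
        = (u ^ N * (q N : ℂ) - (q N : ℂ)) - ((N : ℂ) * (q N : ℂ)) * (u - 1) := by
      intro N
      linear_combination (q N : ℂ) * aux_polyid u N
    rw [tsum_congr hterm, Summable.tsum_sub ((hSf u hu).sub hSq) (hSNqC.mul_right (u - 1)),
      Summable.tsum_sub (hSf u hu) hSq, htsumq, tsum_mul_right, ← hμC]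
  -- value at 1
  have hh1 : hh 1 = μC := by
    rw [hhdef, hμC]
    simp only [one_pow, Finset.sum_const, Finset.card_range, nsmul_eq_mul, mul_one]
    exact tsum_congr fun N => by ring
  -- nonvanishing of f - 1 on the closed unit disc away from 1
  have hfne : ∀ u : ℂ, ‖u‖ ≤ 1 → u ≠ 1 → (∑' N : ℕ, u ^ N * (q N : ℂ)) ≠ 1 := by
    intro u hu hne hf
    have hur : ‖u‖ ≤ r := hu.trans hr1.le
    have hS : Summable (fun N : ℕ => u ^ N * (q N : ℂ)) := hSf u hur
    have hre : ∀ N : ℕ, (u ^ N * (q N : ℂ)).re = (u ^ N).re * q N := by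
      intro N; simp [Complex.mul_re]
    have hSre : Summable (fun N : ℕ => (u ^ N).re * q N) := by
      have h := (Complex.hasSum_re hS.hasSum).summable
      exact h.congr fun N => hre N
    have htsumre : ∑' N : ℕ, (u ^ N).re * q N = 1 := by
      calc ∑' N : ℕ, (u ^ N).re * q N = ∑' N : ℕ, (u ^ N * (q N : ℂ)).re :=
            tsum_congr fun N => (hre N).symm
        _ = (∑' N : ℕ, u ^ N * (q N : ℂ)).re := (Complex.re_tsum hS).symm
        _ = 1 := by rw [hf, Complex.one_re]
    have habs : ∀ N : ℕ, ‖u ^ N‖ ≤ 1 := by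
      intro N; rw [norm_pow]; exact pow_le_one₀ (norm_nonneg u) hu
    have hterm_nonneg : ∀ N : ℕ, 0 ≤ q N - (u ^ N).re * q N := by
      intro N
      have h1 : (u ^ N).re ≤ 1 := (Complex.re_le_norm _).trans (habs N)
      nlinarith [hqnn N]
    have ht0 : ∑' N : ℕ, (q N - (u ^ N).re * q N) = 0 := by
      rw [Summable.tsum_sub hqsummable hSre, hqsum, htsumre, sub_self]
    have hall : ∀ N : ℕ, q N ≠ 0 → u ^ N = 1 := by
      intro N hqN
      have hre1 : (u ^ N).re = 1 := by
        by_contra hre1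
        have h1 : (u ^ N).re < 1 :=
          lt_of_le_of_ne ((Complex.re_le_norm _).trans (habs N)) hre1
        have hqpos : 0 < q N := lt_of_le_of_ne (hqnn N) (Ne.symm hqN)
        have hpos : 0 < q N - (u ^ N).re * q N := by nlinarith
        have := Summable.tsum_pos (hqsummable.sub hSre) hterm_nonneg N hpos
        rw [ht0] at this
        exact lt_irrefl 0 this
      have him : (u ^ N).im = 0 := by
        have h2 : ‖u ^ N‖ ≤ 1 := by
          exact habs N
        have h3 := Complex.sq_norm (u ^ N)
        rw [Complex.normSq_apply] at h3
        nlinarith [norm_nonneg (u ^ N)]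
      exact Complex.ext (by rw [hre1]; rfl) (by rw [him]; rfl)
    have hdvd : ∀ N : ℕ, q N ≠ 0 → orderOf u ∣ N :=
      fun N hN => orderOf_dvd_of_pow_eq_one (hall N hN)
    exact hne (orderOf_eq_one_iff.1 (haper (orderOf u) hdvd))
  -- nonvanishing of hh on the closed unit disc
  have hhne : ∀ u : ℂ, ‖u‖ ≤ 1 → hh u ≠ 0 := by
    intro u hu h0
    by_cases h1 : u = 1
    · rw [h1, hh1] at h0; exact hμne h0
    · have h2 := hid1 u (hu.trans hr1.le)
      rw [h0, mul_zero] at h2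
      rw [eq_comm, sub_eq_zero] at h2
      exact hfne u hu h1 h2
  -- differentiability
  have hdiffh : DifferentiableOn ℂ hh (ball (0:ℂ) r) := by
    apply Complex.differentiableOn_tsum_of_summable_norm hS1
      (fun N => (Differentiable.differentiableOn (by fun_prop))) isOpen_ball
    intro N w hw
    exact hb1 w (mem_ball_zero_iff.1 hw).le N
  have hdiffg : DifferentiableOn ℂ gg (ball (0:ℂ) r) := by
    apply Complex.differentiableOn_tsum_of_summable_norm hS2
      (fun N => (Differentiable.differentiableOn (by fun_prop))) isOpen_ball
    intro N w hw
    exact hb2 w (mem_ball_zero_iff.1 hw).le N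
  -- compactness argument
  set U : Set ℂ := ball (0:ℂ) r ∩ hh ⁻¹' ({0}ᶜ) with hUdef
  have hUopen : IsOpen U :=
    hdiffh.continuousOn.isOpen_inter_preimage isOpen_ball (isOpen_compl_singleton)
  have hKU : closedBall (0:ℂ) 1 ⊆ U := by
    intro u hu
    have hu1 : ‖u‖ ≤ 1 := mem_closedBall_zero_iff.1 hu
    exact ⟨mem_ball_zero_iff.2 (lt_of_le_of_lt hu1 hr1), fun h => hhne u hu1 h⟩
  obtain ⟨δ, hδ, hsub⟩ :=
    (isCompact_closedBall (0:ℂ) 1).exists_cthickening_subset_open hUopen hKU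
  rw [cthickening_closedBall hδ.le zero_le_one] at hsub
  have hball : ball (0:ℂ) (1 + δ) ⊆ U := by
    intro u hu
    apply hsub
    rw [mem_closedBall_zero_iff]
    have := mem_ball_zero_iff.1 hu
    linarith
  have hballr : ball (0:ℂ) (1 + δ) ⊆ ball (0:ℂ) r := fun u hu => (hball hu).1
  refine ⟨δ, hδ, fun u => gg u / (μC * hh u), ?_, ?_⟩
  · apply DifferentiableOn.div (hdiffg.mono hballr)
      ((hdiffh.mono hballr).const_mul μC)
    intro u hu
    exact mul_ne_zero hμne (hball hu).2
  · intro u hu hne1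
    have hur : ‖u‖ ≤ r := (mem_ball_zero_iff.1 (hballr hu)).le
    have e1 := hid1 u hur
    have e2 := hid2 u hur
    show gg u / (μC * hh u) = _
    rw [← e2]
    have eden : ((∑' N : ℕ, u ^ N * (q N : ℂ)) - 1) * μC * (u - 1)
        = (u - 1) ^ 2 * (μC * hh u) := by
      rw [← e1]; ring
    rw [eden]
    exact (mul_div_mul_left _ _ (pow_ne_zero 2 (sub_ne_zero.2 hne1))).symm
end

section
/- Let (ξ_i)_{i≥1} be i.i.d. positive-integer-valued random variables with P(ξ > ℓ) ≤ C e^{-κℓ} for some κ > 0, and let S_m = ξ_1 + ··· + ξ_m. Then there exist ε > 0 and c > 0 such that for all B ∈ ℕ, Σ_{m=1}^{⌊εB⌋} E[ξ_m e^{η ξ_m}; S_m = B] ≤ C' e^{-cB}, uniformly in η sufficiently small. -/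
open MeasureTheory ProbabilityTheory

/-- Large-deviation estimate for renewal counts: if `(ξ_i)` are i.i.d. positive-integer
random variables with exponential tails, then there are `ε > 0` and `c > 0` such that,
uniformly in `η` sufficiently small and in `B`,
`Σ_{m=1}^{⌊εB⌋} E[ξ_m e^{η ξ_m}; ξ_1 + … + ξ_m = B] ≤ C' e^{-cB}`. -/
theorem stmt_7 {Ω : Type*} [MeasurableSpace Ω] (μ : Measure Ω) [IsProbabilityMeasure μ]
    (ξ : ℕ → Ω → ℕ) (hmeas : ∀ i, Measurable (ξ i))
    (hindep : iIndepFun ξ μ)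
    (hident : ∀ i, IdentDistrib (ξ i) (ξ 0) μ μ)
    (hpos : ∀ i ω, 1 ≤ ξ i ω)
    (C κ : ℝ) (hκ : 0 < κ)
    (htail : ∀ ℓ : ℕ, (μ {ω | ℓ < ξ 0 ω}).toReal ≤ C * Real.exp (-κ * ℓ)) :
    ∃ ε > (0 : ℝ), ∃ c > (0 : ℝ), ∃ η₀ > (0 : ℝ), ∃ C' : ℝ,
      ∀ η ∈ Set.Icc (0 : ℝ) η₀, ∀ B : ℕ,
        (∑ m ∈ Finset.Icc 1 ⌊ε * B⌋₊,
          ∫ ω in {ω | (∑ k ∈ Finset.Icc 1 m, ξ k ω) = B},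
            (ξ m ω : ℝ) * Real.exp (η * ξ m ω) ∂μ)
          ≤ C' * Real.exp (-c * B) := by
  classical
  set t : ℝ := κ / 2 with ht_def
  have ht : 0 < t := by positivity
  set X : ℕ → Ω → ℝ := fun i ω => (ξ i ω : ℝ) with hX_def
  have hXmeas : ∀ i, Measurable (X i) := fun i => measurable_from_top.comp (hmeas i)
  have hXindep : iIndepFun X μ :=
    hindep.comp (fun _ (n : ℕ) => (n : ℝ)) fun _ => measurable_from_top
  -- integrability of `exp (t * X 0)`
  have htail' : ∀ n : ℕ, μ {ω | ξ 0 ω = n + 1} ≤ ENNReal.ofReal (C * Real.exp (-κ * n)) := by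
    intro n
    have h0 : (0:ℝ) ≤ C * Real.exp (-κ * n) := le_trans ENNReal.toReal_nonneg (htail n)
    refine (ENNReal.le_ofReal_iff_toReal_le (measure_ne_top μ _) h0).mpr ?_
    refine le_trans ?_ (htail n)
    refine ENNReal.toReal_mono (measure_ne_top μ _) (measure_mono ?_)
    intro ω hω
    simp only [Set.mem_setOf_eq] at hω ⊢
    omega
  have hsummable : Summable (fun n : ℕ => (C * Real.exp t) * Real.exp (t - κ) ^ n) := by
    refine (summable_geometric_of_lt_one (Real.exp_nonneg _) ?_).mul_left _
    exact Real.exp_lt_one_iff.mpr (by linarith)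
  have hgeom : ∀ n : ℕ, Real.exp (t * ((n:ℝ) + 1)) * (C * Real.exp (-κ * n))
      = (C * Real.exp t) * Real.exp (t - κ) ^ n := by
    intro n
    rw [← Real.exp_nat_mul, mul_assoc, ← Real.exp_add,
      show Real.exp (t * ((n:ℝ) + 1)) * (C * Real.exp (-κ * n))
        = C * (Real.exp (t * ((n:ℝ) + 1)) * Real.exp (-κ * n)) from by ring,
      ← Real.exp_add]
    congr 2
    ring
  have hint0 : Integrable (fun ω => Real.exp (t * X 0 ω)) μ := by
    refine ⟨(((hXmeas 0).const_mul t).exp).aestronglyMeasurable, ?_⟩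
    rw [hasFiniteIntegral_iff_norm]
    have key : ∀ ω, ENNReal.ofReal ‖Real.exp (t * X 0 ω)‖ ≤
        ∑' n : ℕ, Set.indicator {ω | ξ 0 ω = n + 1}
          (fun _ => ENNReal.ofReal (Real.exp (t * ((n:ℝ) + 1)))) ω := by
      intro ω
      have h1 : 1 ≤ ξ 0 ω := hpos 0 ω
      refine le_trans (le_of_eq ?_) (ENNReal.le_tsum (ξ 0 ω - 1))
      rw [Set.indicator_of_mem (by simp only [Set.mem_setOf_eq]; omega)]
      rw [Real.norm_eq_abs, abs_of_pos (Real.exp_pos _)]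
      have hcast : ((ξ 0 ω - 1 : ℕ) : ℝ) + 1 = (ξ 0 ω : ℝ) := by
        rw [Nat.cast_sub h1]; push_cast; ring
      simp only [hX_def, hcast]
    calc ∫⁻ ω, ENNReal.ofReal ‖Real.exp (t * X 0 ω)‖ ∂μ
        ≤ ∫⁻ ω, ∑' n : ℕ, Set.indicator {ω | ξ 0 ω = n + 1}
            (fun _ => ENNReal.ofReal (Real.exp (t * ((n:ℝ) + 1)))) ω ∂μ :=
          lintegral_mono key
      _ = ∑' n : ℕ, ∫⁻ ω, Set.indicator {ω | ξ 0 ω = n + 1}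
            (fun _ => ENNReal.ofReal (Real.exp (t * ((n:ℝ) + 1)))) ω ∂μ := by
          refine lintegral_tsum fun n => ?_
          exact (measurable_const.indicator ((hmeas 0) (measurableSet_singleton (n+1)))).aemeasurable
      _ = ∑' n : ℕ, ENNReal.ofReal (Real.exp (t * ((n:ℝ) + 1))) * μ {ω | ξ 0 ω = n + 1} := by
          refine tsum_congr fun n => ?_
          exact lintegral_indicator_const ((hmeas 0) (measurableSet_singleton (n+1))) _
      _ ≤ ∑' n : ℕ, ENNReal.ofReal (Real.exp (t * ((n:ℝ) + 1)) * (C * Real.exp (-κ * n))) := by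
          refine ENNReal.tsum_le_tsum fun n => ?_
          rw [ENNReal.ofReal_mul (Real.exp_nonneg _)]
          exact mul_le_mul_right (htail' n) _
      _ < ⊤ := by
          have h0 : ∀ n : ℕ, (0:ℝ) ≤ Real.exp (t * ((n:ℝ) + 1)) * (C * Real.exp (-κ * n)) := by
            intro n
            have := le_trans ENNReal.toReal_nonneg (htail n)
            positivity
          rw [← ENNReal.ofReal_tsum_of_nonneg h0 (by simpa only [hgeom] using hsummable)]
          exact ENNReal.ofReal_lt_top
  have hXid : ∀ i, IdentDistrib (X i) (X 0) μ μ := fun i =>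
    (hident i).comp measurable_from_top
  have hid2 : ∀ i, IdentDistrib (fun ω => Real.exp (t * X i ω))
      (fun ω => Real.exp (t * X 0 ω)) μ μ := fun i =>
    (hXid i).comp ((measurable_id.const_mul t).exp)
  have hintI : ∀ i, Integrable (fun ω => Real.exp (t * X i ω)) μ := fun i =>
    (hid2 i).integrable_iff.mpr hint0
  have hmgf : ∀ i, mgf (X i) μ t = mgf (X 0) μ t := fun i => (hid2 i).integral_eq
  set M : ℝ := mgf (X 0) μ t with hM_def
  have hM1 : 1 ≤ M := by
    have hle : ∀ ω, (1:ℝ) ≤ Real.exp (t * X 0 ω) := by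
      intro ω
      refine Real.one_le_exp ?_
      have : (0:ℝ) ≤ X 0 ω := Nat.cast_nonneg _
      positivity
    calc (1:ℝ) = ∫ _ω, (1:ℝ) ∂μ := by simp
      _ ≤ ∫ ω, Real.exp (t * X 0 ω) ∂μ := integral_mono (integrable_const 1) hint0 hle
      _ = M := rfl
  set L : ℝ := Real.log M with hL_def
  have hL0 : 0 ≤ L := Real.log_nonneg hM1
  set ε : ℝ := t / (4 * (L + 1)) with hε_def
  have hε : 0 < ε := by positivity
  have hεL : ε * L ≤ t / 4 := by
    have h2 : ε * (L + 1) = t / 4 := by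
      rw [hε_def]; field_simp
    nlinarith [hε.le, hL0]
  refine ⟨ε, hε, 3 * t / 8, by positivity, t / 4, by positivity, ε * (16 / t) ^ 2, ?_⟩
  intro η hη B
  obtain ⟨hη0, hη1⟩ := hη
  -- per-term bound
  have hterm : ∀ m ∈ Finset.Icc 1 ⌊ε * B⌋₊,
      (∫ ω in {ω | (∑ k ∈ Finset.Icc 1 m, ξ k ω) = B}, (ξ m ω : ℝ) * Real.exp (η * ξ m ω) ∂μ)
        ≤ (B * Real.exp (η * B)) * (Real.exp (-t * B) * Real.exp (L * (ε * B))) := by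
    intro m hm
    rw [Finset.mem_Icc] at hm
    obtain ⟨hm1, hm2⟩ := hm
    have hmεB : (m : ℝ) ≤ ε * B :=
      le_trans (Nat.cast_le.mpr hm2) (Nat.floor_le (by positivity))
    have hSmeas : Measurable (fun ω => ∑ k ∈ Finset.Icc 1 m, ξ k ω) :=
      Finset.measurable_sum _ fun k _ => hmeas k
    have hsm : MeasurableSet {ω | (∑ k ∈ Finset.Icc 1 m, ξ k ω) = B} :=
      hSmeas (measurableSet_singleton B)
    -- bound integrand on the set
    have hbound : ∀ ω ∈ {ω | (∑ k ∈ Finset.Icc 1 m, ξ k ω) = B},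
        ‖(ξ m ω : ℝ) * Real.exp (η * ξ m ω)‖ ≤ B * Real.exp (η * B) := by
      intro ω hω
      simp only [Set.mem_setOf_eq] at hω
      have hξB : ξ m ω ≤ B := by
        rw [← hω]
        exact Finset.single_le_sum (f := fun k => ξ k ω) (fun _ _ => Nat.zero_le _)
          (Finset.mem_Icc.mpr ⟨hm1, le_refl m⟩)
      have hξBR : (ξ m ω : ℝ) ≤ B := Nat.cast_le.mpr hξB
      rw [Real.norm_eq_abs, abs_of_nonneg (by positivity)]
      have h3 : Real.exp (η * ξ m ω) ≤ Real.exp (η * B) :=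
        Real.exp_le_exp.mpr (mul_le_mul_of_nonneg_left hξBR hη0)
      have h4 : (0:ℝ) ≤ (ξ m ω : ℝ) := Nat.cast_nonneg _
      nlinarith [Real.exp_pos (η * (ξ m ω : ℝ)), Real.exp_pos (η * (B:ℝ))]
    have hI : (∫ ω in {ω | (∑ k ∈ Finset.Icc 1 m, ξ k ω) = B},
        (ξ m ω : ℝ) * Real.exp (η * ξ m ω) ∂μ)
          ≤ (B * Real.exp (η * B)) * (μ {ω | (∑ k ∈ Finset.Icc 1 m, ξ k ω) = B}).toReal := by
      refine le_trans (le_abs_self _) ?_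
      rw [← Real.norm_eq_abs]
      exact norm_setIntegral_le_of_norm_le_const (measure_lt_top μ _) hbound
    -- Chernoff bound on the measure
    have hsub : {ω | (∑ k ∈ Finset.Icc 1 m, ξ k ω) = B}
        ⊆ {ω | (B:ℝ) ≤ (∑ k ∈ Finset.Icc 1 m, X k) ω} := by
      intro ω hω
      simp only [Set.mem_setOf_eq] at hω ⊢
      rw [Finset.sum_apply]
      simp only [hX_def]
      rw [← Nat.cast_sum, hω]
    have hchern : (μ {ω | (∑ k ∈ Finset.Icc 1 m, ξ k ω) = B}).toReal
        ≤ Real.exp (-t * B) * Real.exp (L * (ε * B)) := by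
      have h1 : (μ {ω | (∑ k ∈ Finset.Icc 1 m, ξ k ω) = B}).toReal
          ≤ (μ {ω | (B:ℝ) ≤ (∑ k ∈ Finset.Icc 1 m, X k) ω}).toReal :=
        ENNReal.toReal_mono (measure_ne_top _ _) (measure_mono hsub)
      have h2 := measure_ge_le_exp_mul_mgf (μ := μ) (X := ∑ k ∈ Finset.Icc 1 m, X k)
        (B : ℝ) ht.le (hXindep.integrable_exp_mul_sum hXmeas (fun i _ => hintI i))
      have h3 : mgf (∑ k ∈ Finset.Icc 1 m, X k) μ t = M ^ m := by
        rw [hXindep.mgf_sum hXmeas]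
        rw [Finset.prod_congr rfl (fun i _ => hmgf i), Finset.prod_const, Nat.card_Icc]
        norm_num
      have h4 : M ^ m ≤ Real.exp (L * (ε * B)) := by
        have hMexp : M = Real.exp L := (Real.exp_log (lt_of_lt_of_le one_pos hM1)).symm
        rw [hMexp, ← Real.exp_nat_mul]
        refine Real.exp_le_exp.mpr ?_
        nlinarith [hmεB, hL0]
      calc (μ {ω | (∑ k ∈ Finset.Icc 1 m, ξ k ω) = B}).toReal
          ≤ Real.exp (-t * B) * mgf (∑ k ∈ Finset.Icc 1 m, X k) μ t := le_trans h1 h2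
        _ = Real.exp (-t * B) * M ^ m := by rw [h3]
        _ ≤ Real.exp (-t * B) * Real.exp (L * (ε * B)) := by
            exact mul_le_mul_of_nonneg_left h4 (Real.exp_nonneg _)
    refine le_trans hI ?_
    have hBnn : (0:ℝ) ≤ (B:ℝ) * Real.exp (η * B) := by positivity
    exact mul_le_mul_of_nonneg_left hchern hBnn
  -- sum the per-term bounds
  have hsum : (∑ m ∈ Finset.Icc 1 ⌊ε * B⌋₊,
      ∫ ω in {ω | (∑ k ∈ Finset.Icc 1 m, ξ k ω) = B},
        (ξ m ω : ℝ) * Real.exp (η * ξ m ω) ∂μ)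
        ≤ (ε * B) * ((B * Real.exp (η * B)) * (Real.exp (-t * B) * Real.exp (L * (ε * B)))) := by
    refine le_trans (Finset.sum_le_card_nsmul _ _ _ hterm) ?_
    rw [nsmul_eq_mul, Nat.card_Icc]
    have hcard : ((⌊ε * B⌋₊ + 1 - 1 : ℕ) : ℝ) ≤ ε * B := by
      push_cast [Nat.add_sub_cancel]
      exact Nat.floor_le (by positivity)
    have hbn : (0:ℝ) ≤ (B * Real.exp (η * B)) * (Real.exp (-t * B) * Real.exp (L * (ε * B))) := by
      positivity
    exact mul_le_mul_of_nonneg_right hcard hbn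
  refine le_trans hsum ?_
  -- final arithmetic
  have hLεB : L * (ε * B) = (ε * L) * B := by ring
  have hexp1 : Real.exp (η * B) * (Real.exp (-t * B) * Real.exp (L * (ε * B)))
      ≤ Real.exp (-(t / 2) * B) := by
    rw [← Real.exp_add, ← Real.exp_add]
    refine Real.exp_le_exp.mpr ?_
    rw [hLεB]
    have hB0 : (0:ℝ) ≤ (B:ℝ) := Nat.cast_nonneg _
    nlinarith [mul_le_mul_of_nonneg_right hη1 hB0, mul_le_mul_of_nonneg_right hεL hB0]
  have hB1 : (B:ℝ) ≤ (16 / t) * Real.exp (t * B / 16) := by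
    have h := Real.add_one_le_exp (t * B / 16)
    have hpos16 : (0:ℝ) < 16 / t := by positivity
    have h' := mul_le_mul_of_nonneg_left h hpos16.le
    have heq : 16 / t * (t * B / 16 + 1) = (B:ℝ) + 16 / t := by field_simp
    rw [heq] at h'
    linarith
  have hB2 : (B:ℝ) ^ 2 ≤ (16 / t) ^ 2 * Real.exp (t * B / 8) := by
    have hsq : Real.exp (t * B / 16) * Real.exp (t * B / 16) = Real.exp (t * B / 8) := by
      rw [← Real.exp_add]; ring_nf
    have hB0 : (0:ℝ) ≤ (B:ℝ) := Nat.cast_nonneg _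
    nlinarith [Real.exp_pos (t * B / 16), hB1]
  calc (ε * B) * ((B * Real.exp (η * B)) * (Real.exp (-t * B) * Real.exp (L * (ε * B))))
      = ε * (B:ℝ)^2 * (Real.exp (η * B) * (Real.exp (-t * B) * Real.exp (L * (ε * B)))) := by
        ring
    _ ≤ ε * (B:ℝ)^2 * Real.exp (-(t / 2) * B) := by
        refine mul_le_mul_of_nonneg_left hexp1 (by positivity)
    _ ≤ ε * ((16 / t) ^ 2 * Real.exp (t * B / 8)) * Real.exp (-(t / 2) * B) := by
        refine mul_le_mul_of_nonneg_right (mul_le_mul_of_nonneg_left hB2 hε.le)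
          (Real.exp_nonneg _)
    _ = ε * (16 / t) ^ 2 * Real.exp (-(3 * t / 8) * B) := by
        have hh : Real.exp (t * B / 8) * Real.exp (-(t / 2) * B)
            = Real.exp (-(3 * t / 8) * B) := by
          rw [← Real.exp_add]; congr 1; ring
        rw [← hh]; ring
end

section
/- Let I : ℕ → [0,∞) satisfy I(B) ≤ C B^{-d/2} with d ≥ 3. Then for all sufficiently small η > 0: Σ_{n≥1} (e^η − 1)^{n−1} Σ_{B_1,…,B_n ≥ 1, Σ B_i > K} Π_{i=1}^n I(B_i) ≤ C' (1+K)^{1−d/2}, uniformly in K ≥ 0. -/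
open scoped ENNReal



private lemma rpow_anti {c x y : ℝ} (hc : c ≤ 0) (hx : 0 < x) (hxy : x ≤ y) : y ^ c ≤ x ^ c :=
  Real.rpow_le_rpow_of_nonpos hx hxy hc

private lemma tail_bound (p : ℝ) (hp : 1 < p) :
    ∃ A : ℝ, 0 ≤ A ∧ ∀ (m : ℕ) (s : Finset ℕ),
      (∑ b ∈ s, if m < b then (b : ℝ) ^ (-p) else 0) ≤ A * ((1 : ℝ) + m) ^ (1 - p) := by
  have hsum : Summable (fun b : ℕ => (b : ℝ) ^ (-p)) :=
    Real.summable_nat_rpow.mpr (by linarith)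
  set Z : ℝ := ∑' b : ℕ, (b : ℝ) ^ (-p) with hZ
  have hZ0 : 0 ≤ Z := tsum_nonneg (fun b => Real.rpow_nonneg (Nat.cast_nonneg _) _)
  refine ⟨max Z ((2:ℝ) ^ (p-1) / (p-1)), le_trans hZ0 (le_max_left _ _), ?_⟩
  intro m s
  rcases Nat.eq_zero_or_pos m with hm | hm
  · subst hm
    have h1 : (∑ b ∈ s, if 0 < b then (b : ℝ) ^ (-p) else 0) ≤ ∑ b ∈ s, (b : ℝ) ^ (-p) := by
      refine Finset.sum_le_sum fun b _ => ?_
      split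
      · exact le_rfl
      · exact Real.rpow_nonneg (Nat.cast_nonneg _) _
    have h2 : (∑ b ∈ s, (b : ℝ) ^ (-p)) ≤ Z :=
      Summable.sum_le_tsum s (fun b _ => Real.rpow_nonneg (Nat.cast_nonneg _) _) hsum
    have h3 : ((1 : ℝ) + (0:ℕ)) ^ (1 - p) = 1 := by norm_num
    rw [h3, mul_one]
    exact (h1.trans h2).trans (le_max_left _ _)
  · -- m ≥ 1
    have hm1 : (1 : ℝ) ≤ (m : ℝ) := by exact_mod_cast hm
    set N : ℕ := m + s.sup id with hN
    have step2 : (∑ b ∈ s, if m < b then (b : ℝ) ^ (-p) else 0)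
        ≤ ∑ b ∈ Finset.Ioc m N, (b : ℝ) ^ (-p) := by
      rw [← Finset.sum_filter]
      refine Finset.sum_le_sum_of_subset_of_nonneg ?_
        (fun b _ _ => Real.rpow_nonneg (Nat.cast_nonneg _) _)
      intro b hb
      rw [Finset.mem_filter] at hb
      rw [Finset.mem_Ioc]
      exact ⟨hb.2, le_trans (Finset.le_sup (f := id) hb.1) (Nat.le_add_left _ _)⟩
    have hanti : AntitoneOn (fun x : ℝ => x ^ (-p)) (Set.Icc (m : ℝ) ((m : ℝ) + (N - m : ℕ))) := by
      intro x hx y hy hxy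
      refine rpow_anti (by linarith) ?_ hxy
      linarith [hx.1]
    have step3 : (∑ b ∈ Finset.Ioc m N, (b : ℝ) ^ (-p))
        = ∑ i ∈ Finset.range (N - m), ((m : ℝ) + ((i + 1 : ℕ) : ℝ)) ^ (-p) := by
      have h4 : Finset.Ioc m N = Finset.Ico (m+1) (N+1) := by
        ext x; simp only [Finset.mem_Ioc, Finset.mem_Ico]; omega
      rw [h4, Finset.sum_Ico_eq_sum_range]
      have hc : N + 1 - (m + 1) = N - m := by omega
      rw [hc]
      refine Finset.sum_congr rfl fun i _ => ?_
      congr 1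
      push_cast; ring
    have step4 : (∑ i ∈ Finset.range (N - m), ((m : ℝ) + ((i + 1 : ℕ) : ℝ)) ^ (-p))
        ≤ ∫ x in (m : ℝ)..((m : ℝ) + (N - m : ℕ)), x ^ (-p) :=
      hanti.sum_le_integral
    have step5 : (∫ x in (m : ℝ)..((m : ℝ) + (N - m : ℕ)), x ^ (-p))
        ≤ (m : ℝ) ^ (1 - p) / (p - 1) := by
      have hne : -p ≠ -1 := by intro h; rw [neg_inj.mp h] at hp; exact lt_irrefl _ hp
      have hnotmem : (0:ℝ) ∉ Set.uIcc (m : ℝ) ((m : ℝ) + (N - m : ℕ)) := by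
        intro h
        rcases Set.mem_uIcc.mp h with ⟨h1, _⟩ | ⟨h1, _⟩
        · linarith
        · linarith [(Nat.cast_nonneg (N - m) : (0:ℝ) ≤ ((N - m : ℕ) : ℝ))]
      rw [integral_rpow (Or.inr ⟨hne, hnotmem⟩)]
      have h1p : -p + 1 = 1 - p := by ring
      rw [h1p]
      have hT0 : (0:ℝ) ≤ ((m : ℝ) + (N - m : ℕ)) ^ (1 - p) :=
        Real.rpow_nonneg (by have h := (Nat.cast_nonneg (N - m) : (0:ℝ) ≤ ((N - m : ℕ) : ℝ)); linarith) _
      have e : (1 - p) = -(p - 1) := by ring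
      have heq : (((m : ℝ) + (N - m : ℕ)) ^ (1-p) - (m:ℝ) ^ (1-p)) / (1 - p)
          = ((m:ℝ) ^ (1-p) - ((m : ℝ) + (N - m : ℕ)) ^ (1-p)) / (p - 1) := by
        rw [e, div_neg, ← neg_div, neg_sub]
      rw [heq]
      refine (div_le_div_iff_of_pos_right (by linarith)).mpr (by linarith)
    have step7 : (m : ℝ) ^ (1 - p) / (p - 1)
        ≤ ((2:ℝ) ^ (p-1) / (p-1)) * ((1 : ℝ) + m) ^ (1 - p) := by
      have h2m : (1:ℝ) + m ≤ 2 * m := by linarith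
      have ha : ((2:ℝ) * m) ^ (1-p) ≤ ((1:ℝ) + m) ^ (1-p) :=
        rpow_anti (by linarith) (by linarith) h2m
      have hmul : ((2:ℝ) * m) ^ (1-p) = 2 ^ (1-p) * (m:ℝ) ^ (1-p) :=
        Real.mul_rpow (by norm_num) (Nat.cast_nonneg m)
      have h2cancel : (2:ℝ) ^ (p-1) * (2:ℝ) ^ (1-p) = 1 := by
        rw [← Real.rpow_add (by norm_num)]; norm_num
      have key : (m : ℝ) ^ (1 - p) ≤ (2:ℝ) ^ (p-1) * ((1 : ℝ) + m) ^ (1 - p) := by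
        calc (m : ℝ) ^ (1 - p) = (2:ℝ) ^ (p-1) * ((2:ℝ) ^ (1-p) * (m:ℝ) ^ (1-p)) := by
              rw [← mul_assoc, h2cancel, one_mul]
          _ = (2:ℝ) ^ (p-1) * ((2:ℝ) * m) ^ (1-p) := by rw [hmul]
          _ ≤ (2:ℝ) ^ (p-1) * ((1 : ℝ) + m) ^ (1 - p) := by
              exact mul_le_mul_of_nonneg_left ha (Real.rpow_nonneg (by norm_num) _)
      calc (m : ℝ) ^ (1 - p) / (p - 1) ≤ ((2:ℝ) ^ (p-1) * ((1 : ℝ) + m) ^ (1 - p)) / (p-1) :=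
            (div_le_div_iff_of_pos_right (by linarith)).mpr key
        _ = ((2:ℝ) ^ (p-1) / (p-1)) * ((1 : ℝ) + m) ^ (1 - p) := by ring
    calc (∑ b ∈ s, if m < b then (b : ℝ) ^ (-p) else 0)
        ≤ (m : ℝ) ^ (1 - p) / (p - 1) := by
          rw [step3] at step2; exact (step2.trans step4).trans step5
      _ ≤ ((2:ℝ) ^ (p-1) / (p-1)) * ((1 : ℝ) + m) ^ (1 - p) := step7
      _ ≤ max Z ((2:ℝ) ^ (p-1) / (p-1)) * ((1 : ℝ) + m) ^ (1 - p) :=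
          mul_le_mul_of_nonneg_right (le_max_right _ _)
            (Real.rpow_nonneg (by linarith) _)


private lemma ite_ofReal (c : Prop) [Decidable c] (x : ℝ) :
    (if c then ENNReal.ofReal x else 0) = ENNReal.ofReal (if c then x else 0) := by
  split <;> simp

private lemma ofReal_tsum_le {ι : Type*} {f : ι → ℝ} (hf : ∀ i, 0 ≤ f i) :
    ENNReal.ofReal (∑' i, f i) ≤ ∑' i, ENNReal.ofReal (f i) := by
  by_cases h : Summable f
  · rw [ENNReal.ofReal_tsum_of_nonneg hf h]
  · rw [tsum_eq_zero_of_not_summable h]; simp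

private lemma real_tsum_le {ι : Type*} {f : ι → ℝ} (hf : ∀ i, 0 ≤ f i) {c : ℝ} (hc : 0 ≤ c)
    (h : (∑' i, ENNReal.ofReal (f i)) ≤ ENNReal.ofReal c) : ∑' i, f i ≤ c := by
  have hfin : (∑' i, ENNReal.ofReal (f i)) ≠ ⊤ := (h.trans_lt ENNReal.ofReal_lt_top).ne
  have hsum : Summable f := by
    have h2 := ENNReal.summable_toReal hfin
    refine h2.congr fun i => ?_
    exact ENNReal.toReal_ofReal (hf i)
  rw [← ENNReal.ofReal_le_ofReal_iff hc, ENNReal.ofReal_tsum_of_nonneg hf hsum]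
  exact h

private lemma tail_bound_ennreal {p A : ℝ}
    (hA : ∀ (m : ℕ) (s : Finset ℕ),
      (∑ b ∈ s, if m < b then (b : ℝ) ^ (-p) else 0) ≤ A * ((1 : ℝ) + m) ^ (1 - p)) (m : ℕ) :
    (∑' b : ℕ, if m < b then ENNReal.ofReal ((b : ℝ) ^ (-p)) else 0)
      ≤ ENNReal.ofReal (A * ((1 : ℝ) + m) ^ (1 - p)) := by
  rw [ENNReal.tsum_eq_iSup_sum]
  refine iSup_le fun s => ?_
  calc (∑ b ∈ s, if m < b then ENNReal.ofReal ((b : ℝ) ^ (-p)) else 0)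
      = ∑ b ∈ s, ENNReal.ofReal (if m < b then (b : ℝ) ^ (-p) else 0) :=
        Finset.sum_congr rfl fun b _ => ite_ofReal _ _
    _ = ENNReal.ofReal (∑ b ∈ s, if m < b then (b : ℝ) ^ (-p) else 0) :=
        (ENNReal.ofReal_sum_of_nonneg fun b _ => by
          split
          · exact Real.rpow_nonneg (Nat.cast_nonneg _) _
          · exact le_rfl).symm
    _ ≤ _ := ENNReal.ofReal_le_ofReal (hA m s)


private lemma prod_ite_zero' {n : ℕ} (P : Fin n → Prop) [DecidablePred P] (f : Fin n → ℝ≥0∞) :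
    (∏ i, if P i then f i else 0) = if (∀ i, P i) then ∏ i, f i else 0 := by
  by_cases h : ∀ i, P i
  · simp [h]
  · push_neg at h
    obtain ⟨i, hi⟩ := h
    rw [if_neg (by push_neg; exact ⟨i, hi⟩)]
    exact Finset.prod_eq_zero (Finset.mem_univ i) (by simp [hi])

private lemma tsum_pi_prod' : ∀ (m : ℕ) (f : Fin m → ℕ → ℝ≥0∞),
    ∑' B : Fin m → ℕ, ∏ i, f i (B i) = ∏ i, ∑' b, f i b := by
  intro m
  induction m with
  | zero =>
    intro f
    simp only [Finset.univ_eq_empty, Finset.prod_empty]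
    exact tsum_eq_single default (fun b hb => absurd (Subsingleton.elim b default) hb)
  | succ m ih =>
    intro f
    rw [← (Fin.consEquiv (fun _ : Fin (m+1) => ℕ)).tsum_eq]
    simp only [Fin.consEquiv]
    rw [ENNReal.tsum_prod']
    simp only [Fin.prod_univ_succ, Fin.cons_zero, Fin.cons_succ]
    calc ∑' (a : ℕ) (b : Fin m → ℕ), f 0 a * ∏ i : Fin m, f i.succ (b i)
        = ∑' (a : ℕ), f 0 a * ∑' (b : Fin m → ℕ), ∏ i : Fin m, f i.succ (b i) := by
          congr 1; ext a; exact ENNReal.tsum_mul_left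
      _ = (∑' a, f 0 a) * ∑' (b : Fin m → ℕ), ∏ i : Fin m, f i.succ (b i) := ENNReal.tsum_mul_right
      _ = (∑' a, f 0 a) * ∏ i : Fin m, ∑' b, f i.succ b := by rw [ih]

private lemma key_bound (K n : ℕ) (g : ℕ → ℝ≥0∞) :
    (∑' B : Fin (n+1) → ℕ, if (∀ i, 1 ≤ B i) ∧ K < ∑ i, B i then ∏ i, g (B i) else 0)
      ≤ ((n+1 : ℕ) : ℝ≥0∞) * ((∑' b : ℕ, if 1 ≤ b ∧ K < (n+1) * b then g b else 0)
          * (∑' b : ℕ, if 1 ≤ b then g b else 0) ^ n) := by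
  have hpt : ∀ B : Fin (n+1) → ℕ,
      (if (∀ i, 1 ≤ B i) ∧ K < ∑ i, B i then ∏ i, g (B i) else 0)
      ≤ ∑ j : Fin (n+1), ∏ i,
          (if 1 ≤ B i ∧ (i = j → K < (n+1) * B i) then g (B i) else 0) := by
    intro B
    by_cases hB : (∀ i, 1 ≤ B i) ∧ K < ∑ i, B i
    · rw [if_pos hB]
      obtain ⟨j, -, hj⟩ := Finset.exists_max_image Finset.univ B ⟨0, Finset.mem_univ 0⟩
      have hsum' : (∑ i, B i) ≤ (n+1) * B j := by
        have h1 := Finset.sum_le_card_nsmul Finset.univ B (B j)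
          (fun i _ => hj i (Finset.mem_univ i))
        simpa [Finset.card_univ, mul_comm] using h1
      have hKj : K < (n+1) * B j := lt_of_lt_of_le hB.2 hsum'
      have hterm : (∏ i, if 1 ≤ B i ∧ (i = j → K < (n+1) * B i) then g (B i) else 0)
          = ∏ i, g (B i) := by
        rw [prod_ite_zero']
        exact if_pos (fun i => ⟨hB.1 i, fun hij => by rw [hij]; exact hKj⟩)
      rw [← hterm]
      exact Finset.single_le_sum (f := fun j => ∏ i, if 1 ≤ B i ∧ (i = j → K < (n+1) * B i) then g (B i) else 0) (fun j _ => zero_le) (Finset.mem_univ j)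
    · rw [if_neg hB]; exact zero_le
  calc (∑' B : Fin (n+1) → ℕ, if (∀ i, 1 ≤ B i) ∧ K < ∑ i, B i then ∏ i, g (B i) else 0)
      ≤ ∑' B : Fin (n+1) → ℕ, ∑ j : Fin (n+1), ∏ i,
          (if 1 ≤ B i ∧ (i = j → K < (n+1) * B i) then g (B i) else 0) :=
        ENNReal.tsum_le_tsum hpt
    _ = ∑ j : Fin (n+1), ∑' B : Fin (n+1) → ℕ, ∏ i,
          (if 1 ≤ B i ∧ (i = j → K < (n+1) * B i) then g (B i) else 0) :=
        Summable.tsum_finsetSum (fun _ _ => ENNReal.summable)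
    _ = ∑ j : Fin (n+1), ∏ i : Fin (n+1),
          (∑' b : ℕ, if 1 ≤ b ∧ (i = j → K < (n+1) * b) then g b else 0) :=
        Finset.sum_congr rfl fun j _ =>
          tsum_pi_prod' (n+1) (fun i b => if 1 ≤ b ∧ (i = j → K < (n+1) * b) then g b else 0)
    _ = ∑ j : Fin (n+1), ((∑' b : ℕ, if 1 ≤ b ∧ K < (n+1) * b then g b else 0)
          * (∑' b : ℕ, if 1 ≤ b then g b else 0) ^ n) := by
        refine Finset.sum_congr rfl fun j _ => ?_
        rw [← Finset.mul_prod_erase Finset.univ _ (Finset.mem_univ j)]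
        congr 1
        · exact tsum_congr fun b => by simp
        · calc (∏ i ∈ Finset.univ.erase j,
                (∑' b : ℕ, if 1 ≤ b ∧ (i = j → K < (n+1) * b) then g b else 0))
              = ∏ _i ∈ Finset.univ.erase j, (∑' b : ℕ, if 1 ≤ b then g b else 0) := by
                refine Finset.prod_congr rfl fun i hi => ?_
                have hij : i ≠ j := (Finset.mem_erase.mp hi).1
                exact tsum_congr fun b => by simp [hij]
            _ = (∑' b : ℕ, if 1 ≤ b then g b else 0) ^ n := by
                rw [Finset.prod_const, Finset.card_erase_of_mem (Finset.mem_univ j),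
                  Finset.card_univ, Fintype.card_fin, Nat.add_sub_cancel]
    _ = _ := by
        rw [Finset.sum_const, Finset.card_univ, Fintype.card_fin, nsmul_eq_mul]


set_option maxHeartbeats 1000000 in
/-- Bubble-summation estimate: if `I(B) ≤ C B^{-d/2}` with `d ≥ 3`, then for all
sufficiently small `η > 0` the sum over the number of bubbles `n` and over bubble spans
`B_1,…,B_n ≥ 1` with `Σ B_i > K` of `(e^η - 1)^{n-1} Π I(B_i)` is at most
`C' (1+K)^{1-d/2}`, uniformly in `K ≥ 0`. -/
theorem stmt_9 (d : ℕ) (hd : 3 ≤ d) (I : ℕ → ℝ) (hInn : ∀ B, 0 ≤ I B)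
    (C : ℝ) (hI : ∀ B : ℕ, 1 ≤ B → I B ≤ C * (B : ℝ) ^ (-(d : ℝ) / 2)) :
    ∃ η₀ > 0, ∀ η : ℝ, 0 < η → η ≤ η₀ → ∃ C' : ℝ, ∀ K : ℕ,
      (∑' n : ℕ, (Real.exp η - 1) ^ n *
        ∑' B : Fin (n + 1) → ℕ,
          (if (∀ i, 1 ≤ B i) ∧ K < ∑ i, B i then ∏ i, I (B i) else 0))
        ≤ C' * ((1 : ℝ) + K) ^ ((1 : ℝ) - (d : ℝ) / 2) := by
  have hd3 : (3:ℝ) ≤ (d:ℝ) := by exact_mod_cast hd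
  set p : ℝ := (d:ℝ)/2 with hpdef
  have hp1 : 1 < p := by rw [hpdef]; linarith
  have hpd : p ≤ (d:ℝ) := by rw [hpdef]; linarith
  have hI' : ∀ b : ℕ, 1 ≤ b → I b ≤ C * (b : ℝ) ^ (-p) := by
    intro b hb
    have h := hI b hb
    rwa [show -(d:ℝ)/2 = -p by rw [hpdef]; ring] at h
  obtain ⟨A, hA0, hA⟩ := tail_bound p hp1
  set C₀ : ℝ := max C 0 with hC₀def
  have hC₀0 : 0 ≤ C₀ := le_max_right _ _
  set W : ℝ := C₀ * A with hWdef
  have hW0 : 0 ≤ W := mul_nonneg hC₀0 hA0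
  refine ⟨Real.log (1 + 1/(2*(W+1))), Real.log_pos (by
    have : (0:ℝ) < 1/(2*(W+1)) := by positivity
    linarith), ?_⟩
  intro η hη hηle
  -- the geometric constant
  have hGsum : Summable (fun n : ℕ => ((n:ℝ)+1)^d * (1/2:ℝ)^n) := by
    have h := summable_pow_mul_geometric_of_norm_lt_one (R := ℝ) d
      (r := (1/2:ℝ)) (by rw [Real.norm_eq_abs]; rw [abs_of_pos] <;> norm_num)
    have h1 : Summable (fun n : ℕ => (((n+1:ℕ)):ℝ)^d * (1/2:ℝ)^(n+1)) :=
      (summable_nat_add_iff (f := fun n : ℕ => ((n:ℕ):ℝ)^d * (1/2:ℝ)^n) 1).mpr h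
    refine (h1.mul_left 2).congr fun n => ?_
    push_cast
    ring
  set G : ℝ := ∑' n : ℕ, ((n:ℝ)+1)^d * (1/2:ℝ)^n with hGdef
  have hG0 : 0 ≤ G := tsum_nonneg fun n => by positivity
  refine ⟨W * G, ?_⟩
  intro K
  -- basic positivity facts
  have hKpow0 : (0:ℝ) ≤ ((1:ℝ) + K) ^ (1 - p) := Real.rpow_nonneg (by positivity) _
  have hε0 : 0 ≤ Real.exp η - 1 := by linarith [Real.add_one_le_exp η]
  have hεr : Real.exp η - 1 ≤ 1/(2*(W+1)) := by
    have h1 : Real.exp η ≤ 1 + 1/(2*(W+1)) := by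
      rw [← Real.exp_log (show (0:ℝ) < 1 + 1/(2*(W+1)) by positivity)]
      exact Real.exp_le_exp.mpr hηle
    linarith
  -- per-term domination
  have hub : ∀ b : ℕ, 1 ≤ b →
      ENNReal.ofReal (I b) ≤ ENNReal.ofReal C₀ * ENNReal.ofReal ((b:ℝ) ^ (-p)) := by
    intro b hb
    rw [← ENNReal.ofReal_mul hC₀0]
    apply ENNReal.ofReal_le_ofReal
    calc I b ≤ C * (b:ℝ) ^ (-p) := hI' b hb
      _ ≤ C₀ * (b:ℝ) ^ (-p) :=
          mul_le_mul_of_nonneg_right (le_max_left _ _) (Real.rpow_nonneg (Nat.cast_nonneg _) _)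
  -- the single-bubble sum σ
  set σ : ℝ≥0∞ := ∑' b : ℕ, (if 1 ≤ b then ENNReal.ofReal (I b) else 0) with hσdef
  have hσ : σ ≤ ENNReal.ofReal W := by
    calc σ ≤ ∑' b : ℕ,
          ENNReal.ofReal C₀ * (if 0 < b then ENNReal.ofReal ((b:ℝ) ^ (-p)) else 0) := by
          refine ENNReal.tsum_le_tsum fun b => ?_
          by_cases hb : 1 ≤ b
          · rw [if_pos hb, if_pos (by omega : 0 < b)]
            exact hub b hb
          · rw [if_neg hb, if_neg (by omega)]
            simp
      _ = ENNReal.ofReal C₀ *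
            ∑' b : ℕ, (if 0 < b then ENNReal.ofReal ((b:ℝ) ^ (-p)) else 0) :=
          ENNReal.tsum_mul_left
      _ ≤ ENNReal.ofReal C₀ * ENNReal.ofReal (A * ((1:ℝ) + (0:ℕ)) ^ (1 - p)) :=
          mul_le_mul_right (tail_bound_ennreal hA 0) _
      _ = ENNReal.ofReal W := by
          rw [← ENNReal.ofReal_mul hC₀0]
          norm_num [hWdef]
  have hεσ : ENNReal.ofReal (Real.exp η - 1) * σ ≤ ENNReal.ofReal (1/2) := by
    calc ENNReal.ofReal (Real.exp η - 1) * σ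
        ≤ ENNReal.ofReal (Real.exp η - 1) * ENNReal.ofReal W := mul_le_mul_right hσ _
      _ = ENNReal.ofReal ((Real.exp η - 1) * W) := (ENNReal.ofReal_mul hε0).symm
      _ ≤ ENNReal.ofReal (1/2) := by
          apply ENNReal.ofReal_le_ofReal
          have h1 : (Real.exp η - 1) * W ≤ (1/(2*(W+1))) * W :=
            mul_le_mul_of_nonneg_right hεr hW0
          have h2 : (1/(2*(W+1))) * W ≤ 1/2 := by
            rw [div_mul_eq_mul_div, div_le_div_iff₀ (by positivity) (by norm_num)]
            nlinarith
          linarith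
  -- bound for the tagged bubble sum τ
  have hτ : ∀ n : ℕ, (∑' b : ℕ, if 1 ≤ b ∧ K < (n+1) * b then ENNReal.ofReal (I b) else 0)
      ≤ ENNReal.ofReal W * ENNReal.ofReal (((n:ℝ)+1) ^ (p-1))
          * ENNReal.ofReal (((1:ℝ) + K) ^ (1 - p)) := by
    intro n
    set q : ℕ := K / (n+1) with hqdef
    have step1 : (∑' b : ℕ, if 1 ≤ b ∧ K < (n+1) * b then ENNReal.ofReal (I b) else 0)
        ≤ ENNReal.ofReal C₀ * ∑' b : ℕ, (if q < b then ENNReal.ofReal ((b:ℝ) ^ (-p)) else 0) := by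
      rw [← ENNReal.tsum_mul_left]
      refine ENNReal.tsum_le_tsum fun b => ?_
      by_cases hb : 1 ≤ b ∧ K < (n+1) * b
      · have hqb : q < b := by
          rw [hqdef]
          rw [Nat.div_lt_iff_lt_mul (by omega : 0 < n+1)]
          exact lt_of_lt_of_le hb.2 (le_of_eq (mul_comm _ _))
        rw [if_pos hb, if_pos hqb]
        exact hub b hb.1
      · rw [if_neg hb]
        exact zero_le
    have hreal : A * ((1:ℝ) + q) ^ (1 - p) ≤ A * (((n:ℝ)+1) ^ (p-1) * ((1:ℝ) + K) ^ (1 - p)) := by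
      have hnat : K + 1 ≤ (n+1) * (q+1) := by
        have h1 : (n+1) * q + K % (n+1) = K := Nat.div_add_mod K (n+1)
        have h2 : K % (n+1) < n+1 := Nat.mod_lt _ (Nat.succ_pos n)
        calc K + 1 = (n+1) * q + K % (n+1) + 1 := by rw [h1]
          _ ≤ (n+1) * q + (n+1) := by omega
          _ = (n+1) * (q+1) := by ring
      have hcast : (1:ℝ) + K ≤ ((n:ℝ)+1) * ((1:ℝ) + q) := by
        have : ((K:ℝ) + 1) ≤ ((n:ℝ)+1) * ((q:ℝ)+1) := by exact_mod_cast hnat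
        linarith
      have hq1 : (0:ℝ) < (1:ℝ) + q := by positivity
      have hdivpos : (0:ℝ) < ((1:ℝ) + K)/((n:ℝ)+1) := by positivity
      have hstep : ((1:ℝ)+q) ^ (1-p) ≤ (((1:ℝ) + K)/((n:ℝ)+1)) ^ (1-p) := by
        refine rpow_anti (by linarith) hdivpos ?_
        rw [div_le_iff₀ (by positivity)]
        linarith [hcast]
      have hdiv : (((1:ℝ) + K)/((n:ℝ)+1)) ^ (1-p)
          = ((1:ℝ) + K) ^ (1-p) * ((n:ℝ)+1) ^ (p-1) := by
        rw [Real.div_rpow (by positivity) (by positivity)]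
        have hn : ((n:ℝ)+1) ^ (1-p) = (((n:ℝ)+1) ^ (p-1))⁻¹ := by
          rw [show (1-p : ℝ) = -(p-1) by ring, Real.rpow_neg (by positivity)]
        rw [hn, div_inv_eq_mul]
      have : ((1:ℝ)+q) ^ (1-p) ≤ ((n:ℝ)+1) ^ (p-1) * ((1:ℝ) + K) ^ (1 - p) := by
        rw [mul_comm]
        rw [hdiv] at hstep
        exact hstep
      exact mul_le_mul_of_nonneg_left this hA0
    calc (∑' b : ℕ, if 1 ≤ b ∧ K < (n+1) * b then ENNReal.ofReal (I b) else 0)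
        ≤ ENNReal.ofReal C₀ *
            ∑' b : ℕ, (if q < b then ENNReal.ofReal ((b:ℝ) ^ (-p)) else 0) := step1
      _ ≤ ENNReal.ofReal C₀ * ENNReal.ofReal (A * ((1:ℝ) + q) ^ (1 - p)) :=
          mul_le_mul_right (tail_bound_ennreal hA q) _
      _ ≤ ENNReal.ofReal C₀ *
            ENNReal.ofReal (A * (((n:ℝ)+1) ^ (p-1) * ((1:ℝ) + K) ^ (1 - p))) :=
          mul_le_mul_right (ENNReal.ofReal_le_ofReal hreal) _
      _ = ENNReal.ofReal W * ENNReal.ofReal (((n:ℝ)+1) ^ (p-1))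
            * ENNReal.ofReal (((1:ℝ) + K) ^ (1 - p)) := by
          rw [← ENNReal.ofReal_mul hC₀0, ← mul_assoc]
          rw [← ENNReal.ofReal_mul (by positivity), ← ENNReal.ofReal_mul (by positivity)]
          rw [hWdef]; ring_nf
  -- final assembly
  have hSnn : ∀ (n : ℕ) (B : Fin (n+1) → ℕ),
      (0:ℝ) ≤ (if (∀ i, 1 ≤ B i) ∧ K < ∑ i, B i then ∏ i, I (B i) else 0) := by
    intro n B
    split
    · exact Finset.prod_nonneg fun i _ => hInn _
    · exact le_rfl
  refine real_tsum_le
    (fun n => mul_nonneg (pow_nonneg hε0 n) (tsum_nonneg (hSnn n)))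
    (mul_nonneg (mul_nonneg hW0 hG0) hKpow0) ?_
  have hterm : ∀ n : ℕ,
      ENNReal.ofReal ((Real.exp η - 1) ^ n *
        ∑' B : Fin (n + 1) → ℕ,
          (if (∀ i, 1 ≤ B i) ∧ K < ∑ i, B i then ∏ i, I (B i) else 0))
      ≤ (ENNReal.ofReal W * ENNReal.ofReal (((1:ℝ) + K) ^ (1 - p))) *
          ENNReal.ofReal (((n:ℝ)+1)^d * (1/2:ℝ)^n) := by
    intro n
    have hin : ENNReal.ofReal (∑' B : Fin (n + 1) → ℕ,
          (if (∀ i, 1 ≤ B i) ∧ K < ∑ i, B i then ∏ i, I (B i) else 0))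
        ≤ ∑' B : Fin (n + 1) → ℕ,
          (if (∀ i, 1 ≤ B i) ∧ K < ∑ i, B i then ∏ i, ENNReal.ofReal (I (B i)) else 0) := by
      refine le_trans (ofReal_tsum_le (hSnn n)) (le_of_eq (tsum_congr fun B => ?_))
      split
      · exact ENNReal.ofReal_prod_of_nonneg fun i _ => hInn _
      · exact ENNReal.ofReal_zero
    have hkey := key_bound K n (fun b => ENNReal.ofReal (I b))
    have hτσ : ((n+1 : ℕ) : ℝ≥0∞) *
          ((∑' b : ℕ, if 1 ≤ b ∧ K < (n+1) * b then ENNReal.ofReal (I b) else 0) * σ ^ n)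
        ≤ ((n+1 : ℕ) : ℝ≥0∞) *
          ((ENNReal.ofReal W * ENNReal.ofReal (((n:ℝ)+1) ^ (p-1))
            * ENNReal.ofReal (((1:ℝ) + K) ^ (1 - p))) * σ ^ n) :=
      mul_le_mul_right (mul_le_mul_left (hτ n) _) _
    calc ENNReal.ofReal ((Real.exp η - 1) ^ n *
          ∑' B : Fin (n + 1) → ℕ,
            (if (∀ i, 1 ≤ B i) ∧ K < ∑ i, B i then ∏ i, I (B i) else 0))
        = ENNReal.ofReal (Real.exp η - 1) ^ n *
            ENNReal.ofReal (∑' B : Fin (n + 1) → ℕ,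
              (if (∀ i, 1 ≤ B i) ∧ K < ∑ i, B i then ∏ i, I (B i) else 0)) := by
          rw [ENNReal.ofReal_mul (pow_nonneg hε0 n), ENNReal.ofReal_pow hε0]
      _ ≤ ENNReal.ofReal (Real.exp η - 1) ^ n *
            (((n+1 : ℕ) : ℝ≥0∞) *
              ((ENNReal.ofReal W * ENNReal.ofReal (((n:ℝ)+1) ^ (p-1))
                * ENNReal.ofReal (((1:ℝ) + K) ^ (1 - p))) * σ ^ n)) :=
          mul_le_mul_right ((hin.trans hkey).trans hτσ) _
      _ = (ENNReal.ofReal W * ENNReal.ofReal (((1:ℝ) + K) ^ (1 - p))) *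
            ((((n+1 : ℕ) : ℝ≥0∞) * ENNReal.ofReal (((n:ℝ)+1) ^ (p-1))) *
              (ENNReal.ofReal (Real.exp η - 1) * σ) ^ n) := by
          rw [mul_pow]; ring
      _ ≤ (ENNReal.ofReal W * ENNReal.ofReal (((1:ℝ) + K) ^ (1 - p))) *
            (ENNReal.ofReal (((n:ℝ)+1)^d) * ENNReal.ofReal ((1/2:ℝ))^n) := by
          refine mul_le_mul_right (mul_le_mul ?_ (pow_le_pow_left' hεσ n) (zero_le) (zero_le)) _
          have hcast : ((n+1 : ℕ) : ℝ≥0∞) = ENNReal.ofReal ((n:ℝ)+1) := by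
            rw [show ((n:ℝ)+1) = ((n+1:ℕ):ℝ) by push_cast; ring, ENNReal.ofReal_natCast]
          rw [hcast, ← ENNReal.ofReal_mul (by positivity)]
          apply ENNReal.ofReal_le_ofReal
          have hx1 : (1:ℝ) ≤ (n:ℝ)+1 := by have := (Nat.cast_nonneg n : (0:ℝ) ≤ (n:ℝ)); linarith
          have h1 : ((n:ℝ)+1) ^ (p-1) ≤ ((n:ℝ)+1) ^ (((d-1:ℕ)):ℝ) := by
            refine Real.rpow_le_rpow_of_exponent_le hx1 ?_
            rw [Nat.cast_sub (by omega : 1 ≤ d)]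
            push_cast
            linarith
          have h2 : ((n:ℝ)+1) ^ (((d-1:ℕ)):ℝ) = ((n:ℝ)+1) ^ (d-1:ℕ) := Real.rpow_natCast _ _
          calc ((n:ℝ)+1) * ((n:ℝ)+1) ^ (p-1)
              ≤ ((n:ℝ)+1) * ((n:ℝ)+1) ^ (d-1:ℕ) := by
                refine mul_le_mul_of_nonneg_left ?_ (by positivity)
                rw [← h2]; exact h1
            _ = ((n:ℝ)+1)^d := by
                rw [← pow_succ']
                congr 1
                omega
      _ = (ENNReal.ofReal W * ENNReal.ofReal (((1:ℝ) + K) ^ (1 - p))) *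
            ENNReal.ofReal (((n:ℝ)+1)^d * (1/2:ℝ)^n) := by
          congr 1
          rw [ENNReal.ofReal_mul (by positivity : (0:ℝ) ≤ ((n:ℝ)+1)^d)]
          congr 1
          rw [ENNReal.ofReal_pow (by norm_num : (0:ℝ) ≤ (1/2:ℝ))]
  calc (∑' n : ℕ, ENNReal.ofReal ((Real.exp η - 1) ^ n *
        ∑' B : Fin (n + 1) → ℕ,
          (if (∀ i, 1 ≤ B i) ∧ K < ∑ i, B i then ∏ i, I (B i) else 0)))
      ≤ ∑' n : ℕ, (ENNReal.ofReal W * ENNReal.ofReal (((1:ℝ) + K) ^ (1 - p))) *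
          ENNReal.ofReal (((n:ℝ)+1)^d * (1/2:ℝ)^n) :=
        ENNReal.tsum_le_tsum hterm
    _ = (ENNReal.ofReal W * ENNReal.ofReal (((1:ℝ) + K) ^ (1 - p))) *
          ∑' n : ℕ, ENNReal.ofReal (((n:ℝ)+1)^d * (1/2:ℝ)^n) := ENNReal.tsum_mul_left
    _ = (ENNReal.ofReal W * ENNReal.ofReal (((1:ℝ) + K) ^ (1 - p))) * ENNReal.ofReal G := by
        rw [← ENNReal.ofReal_tsum_of_nonneg (fun n => by positivity) hGsum]
    _ = ENNReal.ofReal (W * G * ((1:ℝ) + K) ^ (1 - p)) := by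
        rw [← ENNReal.ofReal_mul hW0, ← ENNReal.ofReal_mul (mul_nonneg hW0 hKpow0)]
        congr 1
        ring
end

section
/- Let I : ℕ → [0,∞) satisfy I(B) ≤ C B^{-d/2} with d ≥ 3, and ν > η > 0. Then Σ_{t≥1} e^{-(ν−η)t} Σ_{i₀≥1} (e^η − 1)^{i₀} Σ_{B_1,…,B_{i₀} ≥ 1, Σ B_i = K + t} Π_{i=1}^{i₀} B_i^{-d/2} ≤ C' (1+K)^{-d/2}, uniformly in K ≥ 0, for all sufficiently small η. -/
open Finset

namespace Stmt10Aux

noncomputable def Zc (s : ℝ) : ℝ := ∑' n : ℕ, (n : ℝ) ^ (-s)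

noncomputable def Ac (s : ℝ) : ℝ := 2 * 2 ^ s * Zc s

lemma summable_rpow {s : ℝ} (hs : 1 < s) :
    Summable (fun n : ℕ => (n : ℝ) ^ (-s)) := by
  rw [Real.summable_nat_rpow]; linarith

lemma rpow_term_nonneg (s : ℝ) (n : ℕ) : 0 ≤ (n : ℝ) ^ (-s) :=
  Real.rpow_nonneg (by positivity) _

lemma one_le_Zc {s : ℝ} (hs : 1 < s) : 1 ≤ Zc s := by
  have h := Summable.le_tsum (summable_rpow hs) 1 (fun m _ => rpow_term_nonneg s m)
  simpa [Zc] using h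

lemma Ac_pos {s : ℝ} (hs : 1 < s) : 0 < Ac s := by
  have h1 := one_le_Zc hs
  have h2 : (0:ℝ) < 2 ^ s := Real.rpow_pos_of_pos (by norm_num) _
  unfold Ac; nlinarith

lemma rpow_neg_anti {s x y : ℝ} (hs : 0 < s) (hx : 0 < x) (hxy : x ≤ y) :
    y ^ (-s) ≤ x ^ (-s) :=
  Real.rpow_le_rpow_of_nonpos hx hxy (by linarith)

lemma conv_pointwise_aux {s : ℝ} (hs : 1 < s) {a b : ℕ} (hab : a ≤ b) :
    (a : ℝ) ^ (-s) * (b : ℝ) ^ (-s) ≤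
      2 ^ s * ((a + b : ℕ) : ℝ) ^ (-s) * ((a : ℝ) ^ (-s) + (b : ℝ) ^ (-s)) := by
  rcases Nat.eq_zero_or_pos b with hb | hb
  · have ha : a = 0 := by omega
    subst ha; subst hb
    simp [Real.zero_rpow (neg_ne_zero.mpr (by linarith : s ≠ 0))]
  · have hn : 0 < a + b := by omega
    have h1 : ((a + b : ℕ) : ℝ) / 2 ≤ (b : ℝ) := by
      push_cast
      have : (a:ℝ) ≤ b := by exact_mod_cast hab
      linarith
    have h2 : (0:ℝ) < ((a + b : ℕ) : ℝ) / 2 := by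
      have : (0:ℝ) < ((a + b : ℕ) : ℝ) := by exact_mod_cast hn
      linarith
    have hb' : (b : ℝ) ^ (-s) ≤ (((a + b : ℕ) : ℝ) / 2) ^ (-s) :=
      rpow_neg_anti (by linarith) h2 h1
    have hdiv : (((a + b : ℕ) : ℝ) / 2) ^ (-s) = 2 ^ s * ((a + b : ℕ) : ℝ) ^ (-s) := by
      rw [Real.div_rpow (by positivity) (by norm_num), Real.rpow_neg (by norm_num : (0:ℝ) ≤ 2)]
      rw [div_eq_mul_inv, inv_inv]; ring
    have ha0 : 0 ≤ (a : ℝ) ^ (-s) := rpow_term_nonneg s a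
    have hb0 : 0 ≤ (b : ℝ) ^ (-s) := rpow_term_nonneg s b
    have hn0 : 0 ≤ 2 ^ s * ((a + b : ℕ) : ℝ) ^ (-s) := by
      have := rpow_term_nonneg s (a + b)
      have h2' : (0:ℝ) < 2 ^ s := Real.rpow_pos_of_pos (by norm_num) _
      nlinarith
    calc (a : ℝ) ^ (-s) * (b : ℝ) ^ (-s)
        ≤ (a : ℝ) ^ (-s) * (2 ^ s * ((a + b : ℕ) : ℝ) ^ (-s)) := by
          rw [← hdiv]; exact mul_le_mul_of_nonneg_left hb' ha0
      _ ≤ 2 ^ s * ((a + b : ℕ) : ℝ) ^ (-s) * ((a : ℝ) ^ (-s) + (b : ℝ) ^ (-s)) := by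
          nlinarith

lemma conv_pointwise {s : ℝ} (hs : 1 < s) (a b : ℕ) :
    (a : ℝ) ^ (-s) * (b : ℝ) ^ (-s) ≤
      2 ^ s * ((a + b : ℕ) : ℝ) ^ (-s) * ((a : ℝ) ^ (-s) + (b : ℝ) ^ (-s)) := by
  rcases le_total a b with h | h
  · exact conv_pointwise_aux hs h
  · have h0 := conv_pointwise_aux hs h
    rw [Nat.add_comm b a] at h0
    calc (a : ℝ) ^ (-s) * (b : ℝ) ^ (-s) = (b : ℝ) ^ (-s) * (a : ℝ) ^ (-s) := by ring
      _ ≤ 2 ^ s * ((a + b : ℕ) : ℝ) ^ (-s) * ((b : ℝ) ^ (-s) + (a : ℝ) ^ (-s)) := h0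
      _ = 2 ^ s * ((a + b : ℕ) : ℝ) ^ (-s) * ((a : ℝ) ^ (-s) + (b : ℝ) ^ (-s)) := by ring

lemma conv_sum {s : ℝ} (hs : 1 < s) (n : ℕ) :
    ∑ a ∈ range (n + 1), (a : ℝ) ^ (-s) * ((n - a : ℕ) : ℝ) ^ (-s) ≤
      Ac s * (n : ℝ) ^ (-s) := by
  have step1 : ∑ a ∈ range (n + 1), (a : ℝ) ^ (-s) * ((n - a : ℕ) : ℝ) ^ (-s) ≤
      ∑ a ∈ range (n + 1),
        2 ^ s * (n : ℝ) ^ (-s) * ((a : ℝ) ^ (-s) + ((n - a : ℕ) : ℝ) ^ (-s)) := by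
    apply Finset.sum_le_sum
    intro a ha
    have hle : a ≤ n := by simpa [Nat.lt_succ_iff] using ha
    have heq : a + (n - a) = n := by omega
    have := conv_pointwise hs a (n - a)
    rwa [heq] at this
  have step2 : ∑ a ∈ range (n + 1),
      2 ^ s * (n : ℝ) ^ (-s) * ((a : ℝ) ^ (-s) + ((n - a : ℕ) : ℝ) ^ (-s)) =
      2 ^ s * (n : ℝ) ^ (-s) *
        (∑ a ∈ range (n + 1), (a : ℝ) ^ (-s) +
         ∑ a ∈ range (n + 1), ((n - a : ℕ) : ℝ) ^ (-s)) := by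
    rw [← Finset.mul_sum, Finset.sum_add_distrib]
  have step3 : ∑ a ∈ range (n + 1), ((n - a : ℕ) : ℝ) ^ (-s) =
      ∑ a ∈ range (n + 1), (a : ℝ) ^ (-s) := by
    have := Finset.sum_range_reflect (fun a : ℕ => ((a : ℕ) : ℝ) ^ (-s)) (n + 1)
    simp only [Nat.add_sub_cancel] at this
    exact this
  have step4 : ∑ a ∈ range (n + 1), (a : ℝ) ^ (-s) ≤ Zc s :=
    Summable.sum_le_tsum _ (fun i _ => rpow_term_nonneg s i) (summable_rpow hs)
  have h2 : (0:ℝ) < 2 ^ s := Real.rpow_pos_of_pos (by norm_num) _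
  have hn0 : 0 ≤ (n : ℝ) ^ (-s) := rpow_term_nonneg s n
  calc ∑ a ∈ range (n + 1), (a : ℝ) ^ (-s) * ((n - a : ℕ) : ℝ) ^ (-s)
      ≤ 2 ^ s * (n : ℝ) ^ (-s) * (2 * ∑ a ∈ range (n + 1), (a : ℝ) ^ (-s)) := by
        rw [step2, step3] at step1; rw [two_mul]; linarith [step1]
    _ ≤ 2 ^ s * (n : ℝ) ^ (-s) * (2 * Zc s) := by
        apply mul_le_mul_of_nonneg_left (by linarith) (by positivity)
    _ = Ac s * (n : ℝ) ^ (-s) := by unfold Ac; ring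

/-- The composition sum. -/
noncomputable def Fj (s : ℝ) (j n : ℕ) : ℝ :=
  ∑' B : Fin (j + 1) → ℕ, (if (∑ i, B i) = n then ∏ i, ((B i : ℝ)) ^ (-s) else 0)

lemma Fj_summand_nonneg (s : ℝ) {j : ℕ} (n : ℕ) (B : Fin (j + 1) → ℕ) :
    0 ≤ (if (∑ i, B i) = n then ∏ i, ((B i : ℝ)) ^ (-s) else 0) := by
  split
  · exact Finset.prod_nonneg fun i _ => rpow_term_nonneg s (B i)
  · exact le_rfl

lemma Fj_nonneg (s : ℝ) (j n : ℕ) : 0 ≤ Fj s j n :=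
  tsum_nonneg (Fj_summand_nonneg s n)

lemma Fj_support (s : ℝ) (j n : ℕ) :
    ∀ B ∉ Fintype.piFinset (fun _ : Fin (j + 1) => range (n + 1)),
      (if (∑ i, B i) = n then ∏ i, ((B i : ℝ)) ^ (-s) else 0) = 0 := by
  intro B hB
  rw [Fintype.mem_piFinset] at hB
  push_neg at hB
  obtain ⟨i, hi⟩ := hB
  rw [Finset.mem_range, not_lt] at hi
  rw [if_neg]
  intro hsum
  have : B i ≤ ∑ k, B k := Finset.single_le_sum (fun k _ => Nat.zero_le _) (Finset.mem_univ i)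
  omega

lemma Fj_summable (s : ℝ) (j n : ℕ) :
    Summable (fun B : Fin (j + 1) → ℕ =>
      (if (∑ i, B i) = n then ∏ i, ((B i : ℝ)) ^ (-s) else 0)) :=
  summable_of_ne_finset_zero (Fj_support s j n)

lemma Fj_zero_le {s : ℝ} (n : ℕ) : Fj s 0 n ≤ (n : ℝ) ^ (-s) := by
  unfold Fj
  have he := (Equiv.funUnique (Fin 1) ℕ).symm.tsum_eq
    (f := fun B : Fin 1 → ℕ => (if (∑ i, B i) = n then ∏ i, ((B i : ℝ)) ^ (-s) else 0))
  rw [← he]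
  have hcong : ∀ m : ℕ,
      (if (∑ i : Fin 1, ((Equiv.funUnique (Fin 1) ℕ).symm m) i) = n then
        ∏ i : Fin 1, ((((Equiv.funUnique (Fin 1) ℕ).symm m) i : ℝ)) ^ (-s) else 0) =
      (if m = n then (m : ℝ) ^ (-s) else 0) := by
    intro m; simp [Equiv.funUnique]
  rw [tsum_congr hcong, tsum_eq_single n (by intro m hm; simp [hm])]
  simp

lemma Fj_succ (s : ℝ) (hs : 1 < s) (j n : ℕ) :
    Fj s (j + 1) n = ∑ a ∈ range (n + 1), (a : ℝ) ^ (-s) * Fj s j (n - a) := by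
  classical
  have hfe : ∀ p : ℕ × (Fin (j + 1) → ℕ),
      (fun B : Fin (j + 2) → ℕ =>
        (if (∑ i, B i) = n then ∏ i, ((B i : ℝ)) ^ (-s) else 0))
        ((Fin.consEquiv (fun _ : Fin (j + 2) => ℕ)) p) =
      (if p.1 + ∑ i, p.2 i = n then
        (p.1 : ℝ) ^ (-s) * ∏ i, ((p.2 i : ℝ)) ^ (-s) else 0) := by
    rintro ⟨a, t⟩
    have h1 : (Fin.consEquiv (fun _ : Fin (j + 2) => ℕ)) (a, t) = Fin.cons a t := rfl
    simp only [h1, Fin.sum_univ_succ, Fin.prod_univ_succ, Fin.cons_zero, Fin.cons_succ]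
  set G : ℕ × (Fin (j + 1) → ℕ) → ℝ :=
    fun p => if p.1 + ∑ i, p.2 i = n then
      (p.1 : ℝ) ^ (-s) * ∏ i, ((p.2 i : ℝ)) ^ (-s) else 0 with hG
  have step1 : Fj s (j + 1) n = ∑' p : ℕ × (Fin (j + 1) → ℕ), G p := by
    unfold Fj
    rw [← (Fin.consEquiv (fun _ : Fin (j + 2) => ℕ)).tsum_eq
      (fun B : Fin (j + 2) → ℕ =>
        (if (∑ i, B i) = n then ∏ i, ((B i : ℝ)) ^ (-s) else 0))]
    exact tsum_congr hfe
  have hGsupp : ∀ p ∉ (range (n + 1)) ×ˢ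
      (Fintype.piFinset (fun _ : Fin (j + 1) => range (n + 1))), G p = 0 := by
    rintro ⟨a, t⟩ hp
    simp only [hG]
    rw [if_neg]
    intro hsum
    apply hp
    rw [Finset.mem_product]
    constructor
    · rw [Finset.mem_range]; omega
    · rw [Fintype.mem_piFinset]
      intro i
      rw [Finset.mem_range]
      show t i < n + 1
      have : t i ≤ ∑ k, t k :=
        Finset.single_le_sum (fun k _ => Nat.zero_le _) (Finset.mem_univ i)
      omega
  have hGsum : Summable G := summable_of_ne_finset_zero hGsupp
  have hGslice : ∀ a : ℕ, Summable (fun t => G (a, t)) := by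
    intro a
    apply summable_of_ne_finset_zero
      (s := Fintype.piFinset (fun _ : Fin (j + 1) => range (n + 1)))
    intro t ht
    rw [Fintype.mem_piFinset] at ht
    push_neg at ht
    obtain ⟨i, hi⟩ := ht
    rw [Finset.mem_range, not_lt] at hi
    simp only [hG]
    rw [if_neg]
    intro hsum
    have : t i ≤ ∑ k, t k := Finset.single_le_sum (fun k _ => Nat.zero_le _) (Finset.mem_univ i)
    omega
  have step2 : ∑' p : ℕ × (Fin (j + 1) → ℕ), G p = ∑' a, ∑' t, G (a, t) :=
    Summable.tsum_prod' hGsum hGslice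
  have hinner : ∀ a : ℕ, (∑' t, G (a, t)) =
      (if a ≤ n then (a : ℝ) ^ (-s) * Fj s j (n - a) else 0) := by
    intro a
    by_cases ha : a ≤ n
    · rw [if_pos ha]
      have hc : ∀ t : Fin (j + 1) → ℕ, G (a, t) =
          (a : ℝ) ^ (-s) * (if (∑ i, t i) = n - a then ∏ i, ((t i : ℝ)) ^ (-s) else 0) := by
        intro t
        simp only [hG]
        by_cases h : ∑ i, t i = n - a
        · rw [if_pos (by omega), if_pos h]
        · rw [if_neg (by omega), if_neg h, mul_zero]
      rw [tsum_congr hc, tsum_mul_left]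
      rfl
    · rw [if_neg ha]
      have hc : ∀ t : Fin (j + 1) → ℕ, G (a, t) = 0 := by
        intro t
        simp only [hG]
        rw [if_neg (by omega)]
      rw [tsum_congr hc, tsum_zero]
  have step3 : (∑' a, (if a ≤ n then (a : ℝ) ^ (-s) * Fj s j (n - a) else 0)) =
      ∑ a ∈ range (n + 1), (a : ℝ) ^ (-s) * Fj s j (n - a) := by
    rw [tsum_eq_sum (s := range (n + 1))]
    · apply Finset.sum_congr rfl
      intro a ha
      rw [Finset.mem_range, Nat.lt_succ_iff] at ha
      rw [if_pos ha]
    · intro a ha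
      rw [Finset.mem_range, Nat.lt_succ_iff] at ha
      rw [if_neg ha]
  rw [step1, step2, tsum_congr hinner, step3]

lemma Fj_le {s : ℝ} (hs : 1 < s) (j n : ℕ) : Fj s j n ≤ Ac s ^ j * (n : ℝ) ^ (-s) := by
  induction j generalizing n with
  | zero => simpa using Fj_zero_le (s := s) n
  | succ j ih =>
    rw [Fj_succ s hs j n]
    have hA : 0 < Ac s := Ac_pos hs
    calc ∑ a ∈ range (n + 1), (a : ℝ) ^ (-s) * Fj s j (n - a)
        ≤ ∑ a ∈ range (n + 1), (a : ℝ) ^ (-s) * (Ac s ^ j * ((n - a : ℕ) : ℝ) ^ (-s)) := by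
          apply Finset.sum_le_sum
          intro a _
          exact mul_le_mul_of_nonneg_left (ih (n - a)) (rpow_term_nonneg s a)
      _ = Ac s ^ j * ∑ a ∈ range (n + 1), (a : ℝ) ^ (-s) * ((n - a : ℕ) : ℝ) ^ (-s) := by
          rw [Finset.mul_sum]; apply Finset.sum_congr rfl; intro a _; ring
      _ ≤ Ac s ^ j * (Ac s * (n : ℝ) ^ (-s)) :=
          mul_le_mul_of_nonneg_left (conv_sum hs n) (by positivity)
      _ = Ac s ^ (j + 1) * (n : ℝ) ^ (-s) := by ring

end Stmt10Aux

open Stmt10Aux in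
/-- Second bubble-summation estimate, giving the sharper bound `(1+K)^{-d/2}`: for
`d ≥ 3`, `ν > η > 0` with `η` sufficiently small,
`Σ_{t≥1} e^{-(ν-η)t} Σ_{i₀≥1} (e^η-1)^{i₀} Σ_{B_1+…+B_{i₀}=K+t, B_i≥1} Π B_i^{-d/2}
  ≤ C' (1+K)^{-d/2}` uniformly in `K ≥ 0`. -/
theorem stmt_10 (d : ℕ) (hd : 3 ≤ d) (ν : ℝ) (hν : 0 < ν) :
    ∃ η₀ > 0, ∀ η : ℝ, 0 < η → η ≤ η₀ → η < ν → ∃ C' : ℝ, ∀ K : ℕ,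
      (∑' t : ℕ,
        (if 1 ≤ t then
          Real.exp (-(ν - η) * t) *
            ∑' j : ℕ, (Real.exp η - 1) ^ (j + 1) *
              ∑' B : Fin (j + 1) → ℕ,
                (if (∀ i, 1 ≤ B i) ∧ (∑ i, B i) = K + t then
                  ∏ i, ((B i : ℝ)) ^ (-(d : ℝ) / 2) else 0)
        else 0))
        ≤ C' * ((1 : ℝ) + K) ^ (-(d : ℝ) / 2) := by
  obtain ⟨s, hs_def⟩ : ∃ x : ℝ, (d : ℝ) / 2 = x := ⟨_, rfl⟩
  have hs : 1 < s := by
    have h3 : (3 : ℝ) ≤ (d : ℝ) := by exact_mod_cast hd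
    rw [← hs_def]; linarith
  have hA : 0 < Ac s := Ac_pos hs
  have h2A : 0 < (2 * Ac s)⁻¹ := inv_pos.mpr (by linarith)
  refine ⟨Real.log (1 + (2 * Ac s)⁻¹), Real.log_pos (by linarith), ?_⟩
  intro η hη hηle hην
  obtain ⟨ε, hε_def⟩ : ∃ x : ℝ, Real.exp η - 1 = x := ⟨_, rfl⟩
  obtain ⟨r, hr_def⟩ : ∃ x : ℝ, Real.exp (-(ν - η)) = x := ⟨_, rfl⟩
  have hε : 0 < ε := by
    have h1 : 1 < Real.exp η := Real.one_lt_exp_iff.mpr hη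
    rw [← hε_def]; linarith
  have hεA : ε * Ac s ≤ 1 / 2 := by
    have h1 : Real.exp η ≤ 1 + (2 * Ac s)⁻¹ := by
      calc Real.exp η ≤ Real.exp (Real.log (1 + (2 * Ac s)⁻¹)) := Real.exp_le_exp.mpr hηle
        _ = 1 + (2 * Ac s)⁻¹ := Real.exp_log (by linarith)
    have h2 : ε ≤ (2 * Ac s)⁻¹ := by rw [← hε_def]; linarith
    have h3 : ε * Ac s ≤ (2 * Ac s)⁻¹ * Ac s :=
      mul_le_mul_of_nonneg_right h2 (le_of_lt hA)
    have h4 : (2 * Ac s)⁻¹ * Ac s = 1 / 2 := by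
      field_simp
    linarith
  have hr0 : 0 ≤ r := by rw [← hr_def]; exact le_of_lt (Real.exp_pos _)
  have hr1 : r < 1 := by rw [← hr_def, Real.exp_lt_one_iff]; linarith
  refine ⟨2 * ε * (1 - r)⁻¹, ?_⟩
  intro K
  have hexp_eq : -(d : ℝ) / 2 = -s := by rw [← hs_def]; ring
  simp only [hexp_eq, hε_def]
  have hK0 : (0:ℝ) < 1 + (K : ℝ) := by positivity
  have hKs : 0 ≤ ((1 : ℝ) + K) ^ (-s) := Real.rpow_nonneg (le_of_lt hK0) _
  -- the inner B-sum equals Fj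
  have hinner_eq : ∀ (j n : ℕ),
      (∑' B : Fin (j + 1) → ℕ,
        (if (∀ i, 1 ≤ B i) ∧ (∑ i, B i) = n then
          ∏ i, ((B i : ℝ)) ^ (-s) else 0)) = Fj s j n := by
    intro j n
    unfold Fj
    apply tsum_congr
    intro B
    by_cases hsum : (∑ i, B i) = n
    · by_cases hall : ∀ i, 1 ≤ B i
      · rw [if_pos ⟨hall, hsum⟩, if_pos hsum]
      · rw [if_neg (by tauto), if_pos hsum]
        push_neg at hall
        obtain ⟨i, hi⟩ := hall
        have hBi : B i = 0 := by omega
        symm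
        apply Finset.prod_eq_zero (Finset.mem_univ i)
        rw [hBi, Nat.cast_zero]
        exact Real.zero_rpow (neg_ne_zero.mpr (by linarith : s ≠ 0))
    · rw [if_neg (by tauto), if_neg hsum]
  -- middle sum bound
  have hmid : ∀ t : ℕ, 1 ≤ t →
      (∑' j : ℕ, ε ^ (j + 1) * Fj s j (K + t)) ≤ 2 * ε * ((1 : ℝ) + K) ^ (-s) := by
    intro t ht
    apply tsum_le_of_sum_le'
      (mul_nonneg (by linarith) hKs)
    intro J
    have hpoint : ∀ j ∈ J, ε ^ (j + 1) * Fj s j (K + t) ≤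
        (ε * ((1 : ℝ) + K) ^ (-s)) * (ε * Ac s) ^ j := by
      intro j _
      have h1 : Fj s j (K + t) ≤ Ac s ^ j * ((K + t : ℕ) : ℝ) ^ (-s) := Fj_le hs j (K + t)
      have h2 : ((K + t : ℕ) : ℝ) ^ (-s) ≤ ((1 : ℝ) + K) ^ (-s) := by
        apply rpow_neg_anti (by linarith) hK0
        push_cast
        have : (1:ℝ) ≤ (t:ℝ) := by exact_mod_cast ht
        linarith
      have h3 : Fj s j (K + t) ≤ Ac s ^ j * ((1 : ℝ) + K) ^ (-s) := by
        calc Fj s j (K + t) ≤ Ac s ^ j * ((K + t : ℕ) : ℝ) ^ (-s) := h1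
          _ ≤ Ac s ^ j * ((1 : ℝ) + K) ^ (-s) :=
            mul_le_mul_of_nonneg_left h2 (pow_nonneg hA.le j)
      calc ε ^ (j + 1) * Fj s j (K + t)
          ≤ ε ^ (j + 1) * (Ac s ^ j * ((1 : ℝ) + K) ^ (-s)) :=
            mul_le_mul_of_nonneg_left h3 (pow_nonneg hε.le _)
        _ = (ε * ((1 : ℝ) + K) ^ (-s)) * (ε * Ac s) ^ j := by
            rw [pow_succ, mul_pow]; ring
    have hεA0 : 0 ≤ ε * Ac s := mul_nonneg hε.le hA.le
    have hεA1 : ε * Ac s < 1 := by linarith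
    have hgeom_sum : Summable (fun j : ℕ => (ε * Ac s) ^ j) :=
      summable_geometric_of_lt_one hεA0 hεA1
    have hεK : 0 ≤ ε * ((1 : ℝ) + K) ^ (-s) := mul_nonneg hε.le hKs
    calc ∑ j ∈ J, ε ^ (j + 1) * Fj s j (K + t)
        ≤ ∑ j ∈ J, (ε * ((1 : ℝ) + K) ^ (-s)) * (ε * Ac s) ^ j :=
          Finset.sum_le_sum hpoint
      _ = (ε * ((1 : ℝ) + K) ^ (-s)) * ∑ j ∈ J, (ε * Ac s) ^ j := by
          rw [Finset.mul_sum]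
      _ ≤ (ε * ((1 : ℝ) + K) ^ (-s)) * (1 - ε * Ac s)⁻¹ := by
          apply mul_le_mul_of_nonneg_left _ hεK
          calc ∑ j ∈ J, (ε * Ac s) ^ j ≤ ∑' j : ℕ, (ε * Ac s) ^ j :=
              Summable.sum_le_tsum J (fun j _ => pow_nonneg hεA0 j) hgeom_sum
            _ = (1 - ε * Ac s)⁻¹ := tsum_geometric_of_lt_one hεA0 hεA1
      _ ≤ 2 * ε * ((1 : ℝ) + K) ^ (-s) := by
          have hinv : (1 - ε * Ac s)⁻¹ ≤ 2 := by
            rw [show (2:ℝ) = ((1:ℝ)/2)⁻¹ by norm_num]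
            apply inv_anti₀ (by norm_num)
            linarith
          nlinarith
  -- outer sum
  apply tsum_le_of_sum_le'
  · have h1r : 0 < 1 - r := by linarith
    have : (0:ℝ) ≤ 2 * ε * (1 - r)⁻¹ :=
      mul_nonneg (by linarith) (inv_nonneg.mpr h1r.le)
    exact mul_nonneg this hKs
  intro T
  have hterm : ∀ t ∈ T,
      (if 1 ≤ t then
        Real.exp (-(ν - η) * t) *
          ∑' j : ℕ, ε ^ (j + 1) *
            ∑' B : Fin (j + 1) → ℕ,
              (if (∀ i, 1 ≤ B i) ∧ (∑ i, B i) = K + t then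
                ∏ i, ((B i : ℝ)) ^ (-s) else 0)
      else 0) ≤ (2 * ε * ((1 : ℝ) + K) ^ (-s)) * r ^ t := by
    intro t _
    have hnn : 0 ≤ (2 * ε * ((1 : ℝ) + K) ^ (-s)) * r ^ t :=
      mul_nonneg (mul_nonneg (by linarith) hKs) (pow_nonneg hr0 t)
    by_cases ht : 1 ≤ t
    · rw [if_pos ht]
      have hexp : Real.exp (-(ν - η) * t) = r ^ t := by
        rw [← hr_def, ← Real.exp_nat_mul, mul_comm]
      rw [hexp]
      have hrw : (∑' j : ℕ, ε ^ (j + 1) *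
          ∑' B : Fin (j + 1) → ℕ,
            (if (∀ i, 1 ≤ B i) ∧ (∑ i, B i) = K + t then
              ∏ i, ((B i : ℝ)) ^ (-s) else 0)) =
          ∑' j : ℕ, ε ^ (j + 1) * Fj s j (K + t) := by
        apply tsum_congr; intro j; rw [hinner_eq j (K + t)]
      rw [hrw, mul_comm (r ^ t)]
      exact mul_le_mul_of_nonneg_right (hmid t ht) (pow_nonneg hr0 t)
    · rw [if_neg ht]
      exact hnn
  have hgeom : Summable (fun t : ℕ => (2 * ε * ((1 : ℝ) + K) ^ (-s)) * r ^ t) :=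
    (summable_geometric_of_lt_one hr0 hr1).mul_left _
  calc ∑ t ∈ T, (if 1 ≤ t then
        Real.exp (-(ν - η) * t) *
          ∑' j : ℕ, ε ^ (j + 1) *
            ∑' B : Fin (j + 1) → ℕ,
              (if (∀ i, 1 ≤ B i) ∧ (∑ i, B i) = K + t then
                ∏ i, ((B i : ℝ)) ^ (-s) else 0)
      else 0)
      ≤ ∑ t ∈ T, (2 * ε * ((1 : ℝ) + K) ^ (-s)) * r ^ t := Finset.sum_le_sum hterm
    _ ≤ ∑' t : ℕ, (2 * ε * ((1 : ℝ) + K) ^ (-s)) * r ^ t :=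
        Summable.sum_le_tsum T (fun t _ =>
          mul_nonneg (mul_nonneg (by linarith) hKs) (pow_nonneg hr0 t)) hgeom
    _ = (2 * ε * ((1 : ℝ) + K) ^ (-s)) * (1 - r)⁻¹ := by
        rw [tsum_mul_left, tsum_geometric_of_lt_one hr0 hr1]
    _ = 2 * ε * (1 - r)⁻¹ * ((1 : ℝ) + K) ^ (-s) := by ring
end
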